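/- arXiv:1411.6190 — 10 statements merged into one kernel-verified Lean document; each statement's English description precedes it below -/
import Mathlib

section
/- If a distribution F on ℝ is n-completely mixable with center μ₁ and k-completely mixable with center μ₂, then F is nk-completely mixable with center μ₁ and also nk-completely mixable with center μ₂. -/
open MeasureTheory

/-- `F` is `m`-completely mixable with center `μ`. -/
def IsCompleteMixable (m : ℕ) (F : Measure ℝ) (μ : ℝ) : Prop :=
  ∃ (Ω : Type) (_ : MeasurableSpace Ω) (P : Measure Ω) (_ : IsProbabilityMeasure P)
    (X : Fin m → Ω → ℝ), (∀ i, Measurable (X i)) ∧ (∀ i, P.map (X i) = F) ∧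
    (∀ᵐ ω ∂P, ∑ i, X i ω = m * μ)

lemma map_eval_pi {ι Ω : Type*} [Fintype ι] [DecidableEq ι] [MeasurableSpace Ω]
    (P : Measure Ω) [IsProbabilityMeasure P] (j : ι) :
    (Measure.pi fun _ : ι => P).map (Function.eval j) = P := by
  ext s hs
  rw [Measure.map_apply (measurable_pi_apply _) hs, Set.eval_preimage, Measure.pi_pi]
  rw [Finset.prod_eq_single j]
  · simp
  · intro b _ hb; rw [Function.update_of_ne hb]; simp
  · simp

lemma cm_mul_aux (m r : ℕ) (F : Measure ℝ) (μ : ℝ)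
    (h : IsCompleteMixable m F μ) : IsCompleteMixable (m * r) F μ := by
  obtain ⟨Ω, mΩ, P, hP, X, hmeas, hmap, hsum⟩ := h
  haveI := hP
  refine ⟨Fin r → Ω, inferInstance, Measure.pi fun _ => P, inferInstance,
    fun i ω => X (finProdFinEquiv.symm i).1 (ω (finProdFinEquiv.symm i).2), ?_, ?_, ?_⟩
  · intro i
    exact (hmeas _).comp (measurable_pi_apply _)
  · intro i
    show ((Measure.pi fun _ : Fin r => P).map
      (X (finProdFinEquiv.symm i).1 ∘ Function.eval (finProdFinEquiv.symm i).2)) = F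
    rw [← Measure.map_map (hmeas _) (measurable_pi_apply _), map_eval_pi, hmap]
  · have key : ∀ b : Fin r, ∀ᵐ ω ∂(Measure.pi fun _ : Fin r => P),
        ∑ a, X a (ω b) = m * μ := by
      intro b
      rw [ae_iff]
      exact Measure.pi_eval_preimage_null (μ := fun _ : Fin r => P) (ae_iff.1 hsum)
    filter_upwards [ae_all_iff.2 key] with ω hω
    have hsum' : ∑ i : Fin (m * r),
        X (finProdFinEquiv.symm i).1 (ω (finProdFinEquiv.symm i).2)
        = ∑ p : Fin m × Fin r, X p.1 (ω p.2) := by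
      rw [← Equiv.sum_comp finProdFinEquiv (fun i => X (finProdFinEquiv.symm i).1
        (ω (finProdFinEquiv.symm i).2))]
      simp
    rw [hsum', Fintype.sum_prod_type_right]
    simp only [hω]
    simp [Finset.sum_const]
    push_cast
    ring

theorem cm_mul (n k : ℕ) (hn : 1 ≤ n) (hk : 1 ≤ k)
    (F : Measure ℝ) [IsProbabilityMeasure F] (μ₁ μ₂ : ℝ)
    (h1 : IsCompleteMixable n F μ₁) (h2 : IsCompleteMixable k F μ₂) :
    IsCompleteMixable (n * k) F μ₁ ∧ IsCompleteMixable (n * k) F μ₂ := by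
  constructor
  · exact cm_mul_aux n k F μ₁ h1
  · rw [mul_comm]
    exact cm_mul_aux k n F μ₂ h2
end

section
/- If F is an n-completely mixable distribution on ℝ with center μ and bounded essential support [a,b] (where a = sup{t : F(t)=0} and b = inf{t : F(t)=1}), then a + (b-a)/n ≤ μ ≤ b - (b-a)/n. -/
open MeasureTheory

theorem mean_condition
    (n : ℕ) (hn : 1 ≤ n) (F : Measure ℝ) [IsProbabilityMeasure F] (μ a b : ℝ)
    (hCM : ∃ (Ω : Type) (_ : MeasurableSpace Ω) (P : Measure Ω) (_ : IsProbabilityMeasure P)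
      (X : Fin n → Ω → ℝ), (∀ i, Measurable (X i)) ∧ (∀ i, P.map (X i) = F) ∧
      (∀ᵐ ω ∂P, ∑ i, X i ω = n * μ))
    (ha : IsLUB {t : ℝ | F (Set.Iic t) = 0} a)
    (hb : IsGLB {t : ℝ | F (Set.Iic t) = 1} b) :
    a + (b - a) / n ≤ μ ∧ μ ≤ b - (b - a) / n := by
  obtain ⟨Ω, mΩ, P, hP, X, hmX, hmap, hsum⟩ := hCM
  have hnR : (0:ℝ) < n := by exact_mod_cast hn
  -- facts about F
  have hS0 : ∀ t, t < a → F (Set.Iic t) = 0 := by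
    intro t ht
    have hnub : ¬ t ∈ upperBounds {t : ℝ | F (Set.Iic t) = 0} :=
      fun h => absurd (ha.2 h) (not_le.2 ht)
    simp only [upperBounds, Set.mem_setOf_eq, not_forall] at hnub
    obtain ⟨s, hs, hts⟩ := hnub
    push_neg at hts
    exact le_antisymm (hs ▸ measure_mono (Set.Iic_subset_Iic.2 hts.le)) (zero_le)
  have hS1 : ∀ t, b < t → F (Set.Iic t) = 1 := by
    intro t ht
    have hnlb : ¬ t ∈ lowerBounds {t : ℝ | F (Set.Iic t) = 1} :=
      fun h => absurd (hb.2 h) (not_le.2 ht)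
    simp only [lowerBounds, Set.mem_setOf_eq, not_forall] at hnlb
    obtain ⟨s, hs, hts⟩ := hnlb
    push_neg at hts
    exact le_antisymm prob_le_one (hs ▸ measure_mono (Set.Iic_subset_Iic.2 hts.le))
  have hCpos : ∀ t, a < t → F (Set.Iic t) ≠ 0 :=
    fun t ht h => absurd (ha.1 h) (not_le.2 ht)
  have hD : ∀ t, t < b → F (Set.Iic t) ≠ 1 :=
    fun t ht h => absurd (hb.1 h) (not_le.2 ht)
  -- measure of Iio a is 0
  have hIio : F (Set.Iio a) = 0 := by
    have hsub : Set.Iio a ⊆ ⋃ k : ℕ, Set.Iic (a - (1:ℝ)/(k+1)) := by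
      intro x hx
      obtain ⟨k, hk⟩ := exists_nat_one_div_lt (sub_pos.2 (Set.mem_Iio.1 hx))
      exact Set.mem_iUnion.2 ⟨k, by simp only [Set.mem_Iic]; linarith⟩
    have hnull : F (⋃ k : ℕ, Set.Iic (a - (1:ℝ)/(k+1))) = 0 := by
      refine measure_iUnion_null fun k => hS0 _ ?_
      have h1 : (0:ℝ) < 1/((k:ℝ)+1) := by positivity
      linarith
    exact le_antisymm (hnull ▸ measure_mono hsub) (zero_le)
  -- measure of Ioi b is 0
  have hIoi : F (Set.Ioi b) = 0 := by
    have hsub : Set.Ioi b ⊆ ⋃ k : ℕ, (Set.Iic (b + (1:ℝ)/(k+1)))ᶜ := by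
      intro x hx
      obtain ⟨k, hk⟩ := exists_nat_one_div_lt (sub_pos.2 (Set.mem_Iio.1 hx))
      refine Set.mem_iUnion.2 ⟨k, ?_⟩
      simp only [Set.mem_compl_iff, Set.mem_Iic, not_le]
      linarith
    have hnull : F (⋃ k : ℕ, (Set.Iic (b + (1:ℝ)/(k+1)))ᶜ) = 0 := by
      refine measure_iUnion_null fun k => ?_
      have h1 : (0:ℝ) < 1/((k:ℝ)+1) := by positivity
      rw [measure_compl measurableSet_Iic (measure_ne_top F _),
        hS1 _ (by linarith), measure_univ, tsub_self]
    exact le_antisymm (hnull ▸ measure_mono hsub) (zero_le)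
  -- a.s. bounds on X i
  have hlb : ∀ i, ∀ᵐ ω ∂P, a ≤ X i ω := by
    intro i
    have h0 : P (X i ⁻¹' Set.Iio a) = 0 := by
      rw [← Measure.map_apply (hmX i) measurableSet_Iio, hmap i]; exact hIio
    rw [ae_iff]
    convert h0 using 2
    ext ω; simp [not_le]
  have hub : ∀ i, ∀ᵐ ω ∂P, X i ω ≤ b := by
    intro i
    have h0 : P (X i ⁻¹' Set.Ioi b) = 0 := by
      rw [← Measure.map_apply (hmX i) measurableSet_Ioi, hmap i]; exact hIoi
    rw [ae_iff]
    convert h0 using 2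
    ext ω; simp [not_le]
  have hQ : ∀ᵐ ω ∂P, (∑ i, X i ω = n * μ) ∧ ∀ i, a ≤ X i ω ∧ X i ω ≤ b :=
    hsum.and (ae_all_iff.2 fun i => (hlb i).and (hub i))
  -- picking a point in a positive measure set satisfying the a.e. property
  have hpick : ∀ E : Set Ω, P E ≠ 0 → ∃ ω, ω ∈ E ∧
      (∑ i, X i ω = n * μ) ∧ ∀ i, a ≤ X i ω ∧ X i ω ≤ b := by
    intro E hE
    by_contra hcon
    refine hE (measure_mono_null (fun ω hω => ?_) (ae_iff.1 hQ))
    simp only [Set.mem_setOf_eq]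
    intro h
    exact hcon ⟨ω, hω, h⟩
  set j : Fin n := ⟨0, hn⟩ with hj
  have hcard : (Finset.univ.erase j).card = n - 1 := by
    simp [Finset.card_erase_of_mem]
  have hcast : ((n - 1 : ℕ) : ℝ) = (n:ℝ) - 1 := by
    rw [Nat.cast_sub hn]; simp
  constructor
  · -- lower bound on μ
    have key : ∀ ε : ℝ, 0 < ε → b - ε + ((n:ℝ)-1)*a ≤ n*μ := by
      intro ε hε
      have hE : P (X j ⁻¹' Set.Ioi (b - ε)) ≠ 0 := by
        rw [← Measure.map_apply (hmX j) measurableSet_Ioi, hmap j]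
        intro h0
        have hc : F (Set.Iic (b-ε)) = 1 := by
          have hcompl := measure_compl (μ := F) measurableSet_Iic (measure_ne_top F (Set.Iic (b-ε)))
          rw [Set.compl_Iic, h0, measure_univ] at hcompl
          have hle : F (Set.Iic (b-ε)) ≤ 1 := prob_le_one
          have := (tsub_eq_zero_iff_le).1 hcompl.symm
          exact le_antisymm hle this
        exact hD _ (by linarith) hc
      obtain ⟨ω, hωE, hωsum, hωb⟩ := hpick _ hE
      have hXj : b - ε < X j ω := hωE
      have hrest : ((n:ℝ) - 1) * a ≤ ∑ i ∈ Finset.univ.erase j, X i ω := by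
        have h := Finset.card_nsmul_le_sum (Finset.univ.erase j) (fun i => X i ω) a
          (fun i _ => (hωb i).1)
        rw [hcard, nsmul_eq_mul, hcast] at h
        exact h
      have hsplit : X j ω + ∑ i ∈ Finset.univ.erase j, X i ω = ∑ i, X i ω :=
        Finset.add_sum_erase Finset.univ (fun i => X i ω) (Finset.mem_univ j)
      rw [hωsum] at hsplit
      linarith
    have hlow : b + ((n:ℝ)-1)*a ≤ n*μ :=
      le_of_forall_pos_le_add (fun ε hε => by linarith [key ε hε])
    rw [← sub_nonneg]
    have : (b-a)/n ≤ μ - a := by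
      rw [div_le_iff₀ hnR]
      nlinarith
    linarith
  · -- upper bound on μ
    have key : ∀ ε : ℝ, 0 < ε → n*μ ≤ a + ε + ((n:ℝ)-1)*b := by
      intro ε hε
      have hE : P (X j ⁻¹' Set.Iio (a + ε)) ≠ 0 := by
        rw [← Measure.map_apply (hmX j) measurableSet_Iio, hmap j]
        intro h0
        exact hCpos (a + ε/2) (by linarith)
          (measure_mono_null (Set.Iic_subset_Iio.2 (by linarith)) h0)
      obtain ⟨ω, hωE, hωsum, hωb⟩ := hpick _ hE
      have hXj : X j ω < a + ε := hωE
      have hrest : ∑ i ∈ Finset.univ.erase j, X i ω ≤ ((n:ℝ) - 1) * b := by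
        have h := Finset.sum_le_card_nsmul (Finset.univ.erase j) (fun i => X i ω) b
          (fun i _ => (hωb i).2)
        rw [hcard, nsmul_eq_mul, hcast] at h
        exact h
      have hsplit : X j ω + ∑ i ∈ Finset.univ.erase j, X i ω = ∑ i, X i ω :=
        Finset.add_sum_erase Finset.univ (fun i => X i ω) (Finset.mem_univ j)
      rw [hωsum] at hsplit
      linarith
    have hhigh : n*μ ≤ a + ((n:ℝ)-1)*b :=
      le_of_forall_pos_le_add (fun ε hε => by linarith [key ε hε])
    rw [← sub_nonneg]
    have : (b-a)/n ≤ b - μ := by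
      rw [div_le_iff₀ hnR]
      nlinarith
    linarith
end

section
/- The uniform distribution on an interval [a,b] is n-completely mixable for every n ≥ 2, with center (a+b)/2. -/
open MeasureTheory Set

noncomputable section CMaux

lemma cm_affine_me (c d : ℝ) (hc : c ≠ 0) :
    MeasurableEmbedding (fun x : ℝ => c * x + d) :=
  (((Homeomorph.mulLeft₀ c hc).trans (Homeomorph.addRight d)).measurableEmbedding)

lemma cm_map_affine (c d : ℝ) (hc : c ≠ 0) :
    Measure.map (fun x : ℝ => c * x + d) volume = ENNReal.ofReal |c⁻¹| • volume := by
  have h1 : (fun x : ℝ => c * x + d) = (fun y : ℝ => y + d) ∘ (fun x : ℝ => c * x) := rfl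
  rw [h1, ← Measure.map_map (measurable_add_const d) (measurable_const_mul c),
    Real.map_volume_mul_left hc, Measure.map_smul, map_add_right_eq_self volume d]

lemma cm_map_restrict_affine (c d : ℝ) (hc : c ≠ 0) (t : Set ℝ) :
    (volume.restrict ((fun x : ℝ => c * x + d) ⁻¹' t)).map (fun x : ℝ => c * x + d)
      = ENNReal.ofReal |c⁻¹| • volume.restrict t := by
  rw [← (cm_affine_me c d hc).restrict_map, cm_map_affine c d hc, Measure.restrict_smul]

/-- reflection -/
def cmr (x : ℝ) : ℝ := 1 - x
/-- shift by 1/2 mod 1 -/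
def cms (x : ℝ) : ℝ := if x < 1/2 then x + 1/2 else x - 1/2
/-- doubling reflection -/
def cmh (x : ℝ) : ℝ := if x < 1/2 then 1 - 2*x else 2 - 2*x

lemma cmr_measurable : Measurable cmr := measurable_const.sub measurable_id
lemma cms_measurable : Measurable cms :=
  Measurable.ite (measurableSet_lt measurable_id measurable_const)
    (measurable_id.add_const _) (measurable_id.sub_const _)
lemma cmh_measurable : Measurable cmh :=
  Measurable.ite (measurableSet_lt measurable_id measurable_const)
    (measurable_const.sub (measurable_id.const_mul _))
    (measurable_const.sub (measurable_id.const_mul _))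

lemma cm_map_cmr :
    (volume.restrict (Icc (0:ℝ) 1)).map cmr = volume.restrict (Icc (0:ℝ) 1) := by
  have h1 : cmr = fun x : ℝ => (-1) * x + 1 := by funext x; simp only [cmr]; ring
  have h2 : (fun x : ℝ => (-1) * x + 1) ⁻¹' (Icc (0:ℝ) 1) = Icc (0:ℝ) 1 := by
    ext x
    simp only [mem_preimage, mem_Icc]
    constructor <;> intro h <;> constructor <;> linarith [h.1, h.2]
  have key := cm_map_restrict_affine (-1) 1 (by norm_num) (Icc (0:ℝ) 1)
  rw [h2] at key
  rw [h1, key]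
  norm_num

lemma cm_split :
    volume.restrict (Icc (0:ℝ) 1)
      = volume.restrict (Ico (0:ℝ) (1/2)) + volume.restrict (Icc (1/2 : ℝ) 1) := by
  have hu : Ico (0:ℝ) (1/2) ∪ Icc (1/2 : ℝ) 1 = Icc (0:ℝ) 1 :=
    Ico_union_Icc_eq_Icc (by norm_num) (by norm_num)
  have hd : Disjoint (Ico (0:ℝ) (1/2)) (Icc (1/2 : ℝ) 1) := by
    rw [Set.disjoint_left]
    rintro x ⟨_, hx2⟩ ⟨hx3, _⟩; linarith
  rw [← hu, Measure.restrict_union hd measurableSet_Icc]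

lemma cm_map_cms :
    (volume.restrict (Icc (0:ℝ) 1)).map cms = volume.restrict (Icc (0:ℝ) 1) := by
  have e1 : (volume.restrict (Ico (0:ℝ) (1/2))).map cms
      = volume.restrict (Ico (1/2 : ℝ) 1) := by
    have hc : cms =ᵐ[volume.restrict (Ico (0:ℝ) (1/2))] fun x : ℝ => 1 * x + 1/2 := by
      refine Filter.eventuallyEq_of_mem (self_mem_ae_restrict measurableSet_Ico) ?_
      intro x hx
      simp only [cms]
      rw [if_pos hx.2]; ring
    have hp : (fun x : ℝ => 1 * x + 1/2) ⁻¹' (Ico (1/2 : ℝ) 1) = Ico (0:ℝ) (1/2) := by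
      ext x; simp only [mem_preimage, mem_Ico]
      constructor <;> intro h <;> constructor <;> linarith [h.1, h.2]
    have key := cm_map_restrict_affine 1 (1/2) one_ne_zero (Ico (1/2 : ℝ) 1)
    rw [hp] at key
    rw [Measure.map_congr hc, key]
    norm_num
  have e2 : (volume.restrict (Icc (1/2 : ℝ) 1)).map cms
      = volume.restrict (Icc (0:ℝ) (1/2)) := by
    have hc : cms =ᵐ[volume.restrict (Icc (1/2 : ℝ) 1)] fun x : ℝ => 1 * x + -(1/2) := by
      refine Filter.eventuallyEq_of_mem (self_mem_ae_restrict measurableSet_Icc) ?_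
      intro x hx
      simp only [cms]
      rw [if_neg (not_lt.mpr hx.1)]; ring
    have hp : (fun x : ℝ => 1 * x + -(1/2)) ⁻¹' (Icc (0:ℝ) (1/2)) = Icc (1/2 : ℝ) 1 := by
      ext x; simp only [mem_preimage, mem_Icc]
      constructor <;> intro h <;> constructor <;> linarith [h.1, h.2]
    have key := cm_map_restrict_affine 1 (-(1/2)) one_ne_zero (Icc (0:ℝ) (1/2))
    rw [hp] at key
    rw [Measure.map_congr hc, key]
    norm_num
  conv_lhs => rw [cm_split]
  rw [Measure.map_add _ _ cms_measurable, e1, e2,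
    Measure.restrict_congr_set (μ := volume) (Ico_ae_eq_Icc (a := (1/2:ℝ)) (b := (1:ℝ))),
    ← Measure.restrict_congr_set (μ := volume) (Ico_ae_eq_Icc (a := (0:ℝ)) (b := (1/2:ℝ))),
    add_comm, ← cm_split]

lemma cm_map_cmh :
    (volume.restrict (Icc (0:ℝ) 1)).map cmh = volume.restrict (Icc (0:ℝ) 1) := by
  have habs : |(-2 : ℝ)⁻¹| = 1/2 := by
    rw [abs_inv, abs_neg, abs_two]; norm_num
  have e1 : (volume.restrict (Ico (0:ℝ) (1/2))).map cmh
      = ENNReal.ofReal (1/2) • volume.restrict (Icc (0:ℝ) 1) := by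
    have hc : cmh =ᵐ[volume.restrict (Ico (0:ℝ) (1/2))] fun x : ℝ => (-2) * x + 1 := by
      refine Filter.eventuallyEq_of_mem (self_mem_ae_restrict measurableSet_Ico) ?_
      intro x hx
      simp only [cmh]
      rw [if_pos hx.2]; ring
    have hp : (fun x : ℝ => (-2) * x + 1) ⁻¹' (Ioc (0:ℝ) 1) = Ico (0:ℝ) (1/2) := by
      ext x; simp only [mem_preimage, mem_Ioc, mem_Ico]
      constructor <;> intro h <;> constructor <;> linarith [h.1, h.2]
    have key := cm_map_restrict_affine (-2) 1 (by norm_num) (Ioc (0:ℝ) 1)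
    rw [hp, habs, Measure.restrict_congr_set (μ := volume)
      (Ioc_ae_eq_Icc (a := (0:ℝ)) (b := (1:ℝ)))] at key
    rw [Measure.map_congr hc, key]
  have e2 : (volume.restrict (Icc (1/2 : ℝ) 1)).map cmh
      = ENNReal.ofReal (1/2) • volume.restrict (Icc (0:ℝ) 1) := by
    have hc : cmh =ᵐ[volume.restrict (Icc (1/2 : ℝ) 1)] fun x : ℝ => (-2) * x + 2 := by
      refine Filter.eventuallyEq_of_mem (self_mem_ae_restrict measurableSet_Icc) ?_
      intro x hx
      simp only [cmh]
      rw [if_neg (not_lt.mpr hx.1)]; ring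
    have hp : (fun x : ℝ => (-2) * x + 2) ⁻¹' (Icc (0:ℝ) 1) = Icc (1/2 : ℝ) 1 := by
      ext x; simp only [mem_preimage, mem_Icc]
      constructor <;> intro h <;> constructor <;> linarith [h.1, h.2]
    have key := cm_map_restrict_affine (-2) 2 (by norm_num) (Icc (0:ℝ) 1)
    rw [hp, habs] at key
    rw [Measure.map_congr hc, key]
  conv_lhs => rw [cm_split]
  rw [Measure.map_add _ _ cmh_measurable, e1, e2, ← add_smul,
    ← ENNReal.ofReal_add (by norm_num) (by norm_num)]
  norm_num

/-- the i-th mixing map for the n-mix -/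
def cmg (n i : ℕ) : ℝ → ℝ :=
  if n % 2 = 0 then (if i % 2 = 0 then id else cmr)
  else if i = 0 then cms else if i = 1 then cmh else if i % 2 = 0 then id else cmr

lemma cmg_measurable (n i : ℕ) : Measurable (cmg n i) := by
  unfold cmg
  split_ifs <;> first
    | exact measurable_id
    | exact cmr_measurable
    | exact cms_measurable
    | exact cmh_measurable

lemma cm_map_cmg (n i : ℕ) :
    (volume.restrict (Icc (0:ℝ) 1)).map (cmg n i) = volume.restrict (Icc (0:ℝ) 1) := by
  unfold cmg
  split_ifs <;> first
    | exact Measure.map_id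
    | exact cm_map_cmr
    | exact cm_map_cms
    | exact cm_map_cmh

lemma cm_alt_sum (u : ℝ) (m : ℕ) :
    ∑ i ∈ Finset.range (2*m), (if i % 2 = 0 then u else 1 - u) = m := by
  induction m with
  | zero => simp
  | succ m ih =>
    have h2 : 2 * (m+1) = (2*m + 1) + 1 := by ring
    rw [h2, Finset.sum_range_succ, Finset.sum_range_succ, ih]
    have ho : (2*m + 1) % 2 = 1 := by omega
    have he : (2*m) % 2 = 0 := by omega
    rw [ho, he]
    push_cast
    norm_num

lemma cms_cmh_sum (u : ℝ) : cms u + cmh u = 3/2 - u := by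
  unfold cms cmh; split_ifs <;> ring

lemma cm_sum (n : ℕ) (hn : 2 ≤ n) (u : ℝ) :
    ∑ i ∈ Finset.range n, cmg n i u = n / 2 := by
  rcases Nat.even_or_odd n with he | ho
  · obtain ⟨m, hm⟩ := he
    have hmod : n % 2 = 0 := by omega
    have hcongr : ∀ i ∈ Finset.range n, cmg n i u = (if i % 2 = 0 then u else 1 - u) := by
      intro i _
      unfold cmg; rw [if_pos hmod]
      split_ifs <;> simp [cmr]
    rw [Finset.sum_congr rfl hcongr]
    have h2 : n = 2 * m := by omega
    subst h2
    rw [cm_alt_sum u m]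
    push_cast; ring
  · obtain ⟨m, hm⟩ : ∃ m, n = 2*m + 3 := by
      rcases ho with ⟨k, hk⟩; exact ⟨k - 1, by omega⟩
    have hmod : ¬ (n % 2 = 0) := by omega
    subst hm
    rw [show 2*m + 3 = (2*m + 2) + 1 by ring, Finset.sum_range_succ',
      show 2*m + 2 = (2*m + 1) + 1 by ring, Finset.sum_range_succ',
      Finset.sum_range_succ']
    have hstep : ∀ i ∈ Finset.range (2*m),
        cmg (2*m+3) (i + 1 + 1 + 1) u = (if i % 2 = 0 then (1-u) else 1 - (1-u)) := by
      intro i _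
      unfold cmg
      rw [if_neg hmod, if_neg (by omega), if_neg (by omega)]
      by_cases hi : i % 2 = 0
      · rw [if_pos hi, if_neg (by omega)]; simp [cmr]
      · rw [if_neg hi, if_pos (by omega)]; simp
    rw [Finset.sum_congr rfl hstep, cm_alt_sum (1-u) m]
    have h0 : cmg (2*m+3) 0 u = cms u := by unfold cmg; rw [if_neg hmod, if_pos rfl]
    have h1 : cmg (2*m+3) (0+1) u = cmh u := by
      unfold cmg; rw [if_neg hmod, if_neg (by omega), if_pos (by omega)]
    have h2 : cmg (2*m+3) (0+1+1) u = u := by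
      unfold cmg
      rw [if_neg hmod, if_neg (by omega), if_neg (by omega), if_pos (by omega)]; rfl
    rw [h0, h1, h2]
    have h3 := cms_cmh_sum u
    push_cast
    linarith

end CMaux

theorem uniform_interval_cm
    (a b : ℝ) (hab : a < b) (F : Measure ℝ)
    (hF : F = (ENNReal.ofReal (b - a))⁻¹ • volume.restrict (Set.Icc a b))
    (n : ℕ) (hn : 2 ≤ n) :
    ∃ (Ω : Type) (_ : MeasurableSpace Ω) (P : Measure Ω) (_ : IsProbabilityMeasure P)
      (X : Fin n → Ω → ℝ), (∀ i, Measurable (X i)) ∧ (∀ i, P.map (X i) = F) ∧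
      (∀ᵐ ω ∂P, ∑ i, X i ω = n * ((a + b) / 2)) := by
  have hba : (0:ℝ) < b - a := sub_pos.2 hab
  set P : Measure ℝ := volume.restrict (Icc (0:ℝ) 1) with hP
  have hprob : IsProbabilityMeasure P := by
    constructor
    rw [hP, Measure.restrict_apply_univ, Real.volume_Icc]
    norm_num
  refine ⟨ℝ, inferInstance, P, hprob, fun i ω => (b - a) * cmg n i ω + a, ?_, ?_, ?_⟩
  · intro i
    exact ((cmg_measurable n i).const_mul _).add_const _
  · intro i
    show Measure.map (fun ω => (b - a) * cmg n (i : ℕ) ω + a) P = F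
    have hcomp : (fun ω => (b - a) * cmg n (i : ℕ) ω + a)
        = (fun x : ℝ => (b - a) * x + a) ∘ cmg n (i : ℕ) := rfl
    rw [hcomp, ← Measure.map_map ((measurable_const_mul _).add_const _) (cmg_measurable n i),
      cm_map_cmg n i]
    have hp : (fun x : ℝ => (b - a) * x + a) ⁻¹' (Icc a b) = Icc (0:ℝ) 1 := by
      ext x
      simp only [mem_preimage, mem_Icc]
      constructor
      · rintro ⟨h1, h2⟩
        constructor
        · nlinarith
        · nlinarith
      · rintro ⟨h1, h2⟩
        constructor
        · nlinarith
        · nlinarith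
    have key := cm_map_restrict_affine (b - a) a (ne_of_gt hba) (Icc a b)
    rw [hp] at key
    rw [key, hF, abs_of_pos (inv_pos.2 hba), ENNReal.ofReal_inv_of_pos hba]
  · refine Filter.Eventually.of_forall (fun ω => ?_)
    show ∑ i : Fin n, ((b - a) * cmg n (i : ℕ) ω + a) = n * ((a + b) / 2)
    rw [Fin.sum_univ_eq_sum_range (fun i => (b - a) * cmg n i ω + a)]
    rw [Finset.sum_add_distrib, ← Finset.mul_sum, cm_sum n hn ω]
    simp only [Finset.sum_const, Finset.card_range, nsmul_eq_mul]
    ring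
end

section
/- If F is n-completely mixable with center μ, X ~ F, and ||·|| is a law-determined norm, then for all t ∈ ℝ, setting s = (nμ - t)/(n-1), we have ||(X-t)_+|| ≤ (n-1)||(X-s)_-|| and ||(X-t)_-|| ≤ (n-1)||(X-s)_+||. -/
open MeasureTheory

/-- A law-determined norm on real random variables on a probability space `(Ω, P)`,
taking values in `[0, ∞]`. -/
structure LawDeterminedNorm (Ω : Type*) [MeasurableSpace Ω] (P : Measure Ω) where
  N : (Ω → ℝ) → ENNReal
  homog : ∀ (a : ℝ) (X : Ω → ℝ), N (fun ω => a * X ω) = ENNReal.ofReal |a| * N X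
  triangle : ∀ X Y : Ω → ℝ, N (fun ω => X ω + Y ω) ≤ N X + N Y
  definite : ∀ X : Ω → ℝ, N X = 0 → ∀ᵐ ω ∂P, X ω = 0
  law_invariant : ∀ X Y : Ω → ℝ, Measurable X → Measurable Y →
    P.map X = P.map Y → N X = N Y
  mono : ∀ X Y : Ω → ℝ, (∀ᵐ ω ∂P, 0 ≤ X ω ∧ X ω ≤ Y ω) → N X ≤ N Y

lemma ldn_zero {Ω : Type*} [MeasurableSpace Ω] {P : Measure Ω}
    (nrm : LawDeterminedNorm Ω P) : nrm.N (fun _ => 0) = 0 := by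
  have h := nrm.homog 0 (fun _ => 0)
  simpa using h

lemma ldn_sum {Ω : Type*} [MeasurableSpace Ω] {P : Measure Ω}
    (nrm : LawDeterminedNorm Ω P) {ι : Type*} (s : Finset ι) (f : ι → Ω → ℝ) :
    nrm.N (fun ω => ∑ i ∈ s, f i ω) ≤ ∑ i ∈ s, nrm.N (f i) := by
  classical
  induction s using Finset.induction_on with
  | empty => simp [ldn_zero nrm]
  | @insert a s ha ih =>
    simp only [Finset.sum_insert ha]
    calc nrm.N (fun ω => f a ω + ∑ i ∈ s, f i ω)
        ≤ nrm.N (f a) + nrm.N (fun ω => ∑ i ∈ s, f i ω) := nrm.triangle _ _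
      _ ≤ nrm.N (f a) + ∑ i ∈ s, nrm.N (f i) := add_le_add le_rfl ih

lemma aux_cm
    (n : ℕ) (hn : 2 ≤ n) {Ω : Type*} [MeasurableSpace Ω] (P : Measure Ω)
    (μ : ℝ) (Y : Fin n → Ω → ℝ) (hYm : ∀ i, Measurable (Y i))
    (X : Ω → ℝ) (hX : Measurable X) (hXY : ∀ i, P.map X = P.map (Y i))
    (hYsum : ∀ᵐ ω ∂P, ∑ i, Y i ω = n * μ)
    (nrm : LawDeterminedNorm Ω P) (t s : ℝ) (hs : s = (n * μ - t) / (n - 1)) :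
    nrm.N (fun ω => max (X ω - t) 0) ≤ (n - 1) * nrm.N (fun ω => max (-(X ω - s)) 0) := by
  classical
  have hn1 : (1:ℝ) ≤ (n:ℝ) := by exact_mod_cast Nat.one_le_of_lt hn
  have hne : (n:ℝ) - 1 ≠ 0 := by
    have : (2:ℝ) ≤ (n:ℝ) := by exact_mod_cast hn
    linarith
  have hs' : ((n:ℝ) - 1) * s = n * μ - t := by
    rw [hs]; field_simp
  -- law invariance helper
  have hlaw : ∀ (g : ℝ → ℝ), Measurable g → ∀ i,
      nrm.N (fun ω => g (X ω)) = nrm.N (fun ω => g (Y i ω)) := by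
    intro g hg i
    apply nrm.law_invariant _ _ (hg.comp hX) (hg.comp (hYm i))
    show P.map (g ∘ X) = P.map (g ∘ Y i)
    rw [← Measure.map_map hg hX, ← Measure.map_map hg (hYm i), hXY i]
  set i0 : Fin n := ⟨0, by omega⟩
  have hcard : (Finset.univ.erase i0).card = n - 1 := by
    simp [Finset.card_erase_of_mem]
  -- pointwise inequality
  have key : ∀ᵐ ω ∂P, 0 ≤ max (Y i0 ω - t) 0 ∧
      max (Y i0 ω - t) 0 ≤ ∑ i ∈ Finset.univ.erase i0, max (-(Y i ω - s)) 0 := by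
    filter_upwards [hYsum] with ω hω
    refine ⟨le_max_right _ _, ?_⟩
    have hsplit : ∑ i ∈ Finset.univ.erase i0, Y i ω + Y i0 ω = ∑ i, Y i ω :=
      Finset.sum_erase_add _ _ (Finset.mem_univ i0)
    have hsum : Y i0 ω - t = ∑ i ∈ Finset.univ.erase i0, (s - Y i ω) := by
      rw [Finset.sum_sub_distrib, Finset.sum_const, hcard, nsmul_eq_mul]
      have hc : ((n - 1 : ℕ) : ℝ) = (n:ℝ) - 1 := by
        push_cast [Nat.cast_sub (by omega : 1 ≤ n)]; ring
      rw [hc, hs']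
      have : ∑ i ∈ Finset.univ.erase i0, Y i ω = (n:ℝ) * μ - Y i0 ω := by
        rw [← hω]; linarith [hsplit]
      rw [this]; ring
    apply max_le
    · rw [hsum]
      apply Finset.sum_le_sum
      intro i _
      calc s - Y i ω = -(Y i ω - s) := by ring
        _ ≤ max (-(Y i ω - s)) 0 := le_max_left _ _
    · exact Finset.sum_nonneg fun i _ => le_max_right _ _
  have hgpos : Measurable fun x : ℝ => max (x - t) 0 :=
    (measurable_id.sub_const t).max measurable_const
  have hgneg : Measurable fun x : ℝ => max (-(x - s)) 0 :=
    ((measurable_id.sub_const s).neg).max measurable_const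
  calc nrm.N (fun ω => max (X ω - t) 0)
      = nrm.N (fun ω => max (Y i0 ω - t) 0) := hlaw _ hgpos i0
    _ ≤ nrm.N (fun ω => ∑ i ∈ Finset.univ.erase i0, max (-(Y i ω - s)) 0) :=
        nrm.mono _ _ key
    _ ≤ ∑ i ∈ Finset.univ.erase i0, nrm.N (fun ω => max (-(Y i ω - s)) 0) :=
        ldn_sum nrm _ _
    _ = ∑ i ∈ Finset.univ.erase i0, nrm.N (fun ω => max (-(X ω - s)) 0) := by
        apply Finset.sum_congr rfl
        intro i _
        exact (hlaw _ hgneg i).symm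
    _ = ((n:ENNReal) - 1) * nrm.N (fun ω => max (-(X ω - s)) 0) := by
        rw [Finset.sum_const, hcard, nsmul_eq_mul]
        congr 1
        rw [ENNReal.natCast_sub]
        simp

theorem norm_condition_cm
    (n : ℕ) (hn : 2 ≤ n) (Ω : Type*) [MeasurableSpace Ω] (P : Measure Ω)
    [IsProbabilityMeasure P] (F : Measure ℝ) (μ : ℝ)
    (hCM : ∃ Y : Fin n → Ω → ℝ, (∀ i, Measurable (Y i)) ∧ (∀ i, P.map (Y i) = F) ∧
      (∀ᵐ ω ∂P, ∑ i, Y i ω = n * μ))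
    (X : Ω → ℝ) (hX : Measurable X) (hXF : P.map X = F)
    (nrm : LawDeterminedNorm Ω P) (t s : ℝ) (hs : s = (n * μ - t) / (n - 1)) :
    nrm.N (fun ω => max (X ω - t) 0) ≤ (n - 1) * nrm.N (fun ω => max (-(X ω - s)) 0) ∧
    nrm.N (fun ω => max (-(X ω - t)) 0) ≤ (n - 1) * nrm.N (fun ω => max (X ω - s) 0) := by
  obtain ⟨Y, hYm, hYF, hYsum⟩ := hCM
  have hXY : ∀ i, P.map X = P.map (Y i) := fun i => hXF.trans (hYF i).symm
  constructor
  · exact aux_cm n hn P μ Y hYm X hX hXY hYsum nrm t s hs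
  · have hXY' : ∀ i, P.map (fun ω => -X ω) = P.map (fun ω => -Y i ω) := by
      intro i
      show P.map (Neg.neg ∘ X) = P.map (Neg.neg ∘ Y i)
      rw [← Measure.map_map measurable_neg hX, ← Measure.map_map measurable_neg (hYm i), hXY i]
    have hYsum' : ∀ᵐ ω ∂P, ∑ i, (fun ω => -Y i ω) ω = n * (-μ) := by
      filter_upwards [hYsum] with ω hω
      simp only [Finset.sum_neg_distrib]
      rw [hω]; ring
    have hs' : -s = ((n:ℝ) * (-μ) - (-t)) / ((n:ℝ) - 1) := by
      rw [hs]; ring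
    have h := aux_cm n hn P (-μ) (fun i ω => -Y i ω) (fun i => (hYm i).neg)
      (fun ω => -X ω) hX.neg hXY' hYsum' nrm (-t) (-s) hs'
    have e1 : (fun ω => max (-X ω - -t) 0) = (fun ω => max (-(X ω - t)) 0) := by
      funext ω; rw [show -X ω - -t = -(X ω - t) by ring]
    have e2 : (fun ω => max (-(-X ω - -s)) 0) = (fun ω => max (X ω - s) 0) := by
      funext ω; rw [show -(-X ω - -s) = X ω - s by ring]
    rwa [e1, e2] at h
end

section
/- For every n ≥ 1, the binomial distribution with parameters n and 1/n is n-completely mixable with center 1. -/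
open MeasureTheory
open scoped ENNReal

lemma count_agree (n k : ℕ) (g : Fin n → Fin n) :
    (Finset.univ.filter fun ω : Fin n → Fin n =>
      (Finset.univ.filter fun j => ω j = g j).card = k).card
      = n.choose k * (n - 1) ^ (n - k) := by
  rw [Finset.card_eq_sum_card_fiberwise
    (f := fun ω : Fin n → Fin n => Finset.univ.filter fun j => ω j = g j)
    (t := Finset.powersetCard k Finset.univ)
    (fun ω hω => by
      rw [Finset.mem_coe, Finset.mem_powersetCard]
      exact ⟨Finset.subset_univ _, (Finset.mem_filter.mp (Finset.mem_coe.mp hω)).2⟩)]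
  have hfib : ∀ S ∈ Finset.powersetCard k (Finset.univ : Finset (Fin n)),
      ((Finset.univ.filter fun ω : Fin n → Fin n =>
        (Finset.univ.filter fun j => ω j = g j).card = k).filter
        (fun ω => (Finset.univ.filter fun j => ω j = g j) = S)).card = (n-1)^(n-k) := by
    intro S hS
    rw [Finset.mem_powersetCard] at hS
    have h1 : ((Finset.univ.filter fun ω : Fin n → Fin n =>
        (Finset.univ.filter fun j => ω j = g j).card = k).filter
        (fun ω => (Finset.univ.filter fun j => ω j = g j) = S))
        = Fintype.piFinset (fun j => if j ∈ S then {g j} else {g j}ᶜ) := by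
      ext ω
      simp only [Finset.filter_filter, Finset.mem_filter, Finset.mem_univ, true_and,
        Fintype.mem_piFinset]
      constructor
      · rintro ⟨-, h⟩ j
        by_cases hj : j ∈ S <;> simp only [hj, if_true, if_false, Finset.mem_singleton,
          Finset.mem_compl]
        · have := (Finset.ext_iff.mp h j).mpr hj
          simpa using this
        · intro hcon
          exact hj ((Finset.ext_iff.mp h j).mp (by simp [hcon]))
      · intro h
        have heq : (Finset.univ.filter fun j => ω j = g j) = S := by
          ext j
          have := h j
          by_cases hj : j ∈ S <;> simp [hj] at this <;> simp [hj, this]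
        exact ⟨by rw [heq, hS.2], heq⟩
    rw [h1, Fintype.card_piFinset]
    have : ∀ j : Fin n, (if j ∈ S then ({g j} : Finset (Fin n)) else {g j}ᶜ).card
        = if j ∈ S then 1 else n - 1 := by
      intro j
      by_cases hj : j ∈ S <;> simp [hj, Finset.card_compl]
    rw [Finset.prod_congr rfl (fun j _ => this j), Finset.prod_ite, Finset.prod_const,
      Finset.prod_const, one_pow, one_mul]
    congr 1
    rw [Finset.filter_not, Finset.card_sdiff_of_subset (Finset.filter_subset _ _)]
    congr 1
    · simp
    · rw [Finset.filter_mem_eq_inter, Finset.univ_inter, hS.2]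
  rw [Finset.sum_congr rfl hfib, Finset.sum_const, Finset.card_powersetCard, Finset.card_univ,
    Fintype.card_fin, smul_eq_mul]

lemma coeff_eq (n k : ℕ) (hn : 1 ≤ n) (hk : k ≤ n) :
    (((n:ℝ≥0∞))^n)⁻¹ * ((n.choose k * (n-1)^(n-k) : ℕ) : ℝ≥0∞)
      = ENNReal.ofReal ((n.choose k : ℝ) * (1/n)^k * (1-1/n)^(n-k)) := by
  have hnR : (0:ℝ) < n := by exact_mod_cast hn
  have hreal : ((n.choose k : ℝ) * (1/n)^k * (1-1/n)^(n-k))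
      = ((n.choose k * (n-1)^(n-k) : ℕ) : ℝ) / (n:ℝ)^n := by
    have h1 : (1 - 1/(n:ℝ)) = ((n-1:ℕ):ℝ)/n := by
      rw [Nat.cast_sub hn, Nat.cast_one]
      field_simp
    rw [h1]
    have h2 : (n:ℝ)^n = (n:ℝ)^k * (n:ℝ)^(n-k) := by
      rw [← pow_add]; congr 1; omega
    rw [h2]
    push_cast
    rw [div_pow]
    field_simp
    rw [one_pow, mul_one, div_pow, mul_assoc, div_mul_cancel₀ _ (pow_ne_zero _ hnR.ne')]
  rw [hreal, ENNReal.ofReal_div_of_pos (by positivity), ENNReal.ofReal_natCast]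
  rw [show ((n:ℝ)^n) = (((n^n : ℕ):ℝ)) by push_cast; ring, ENNReal.ofReal_natCast]
  rw [ENNReal.div_eq_inv_mul]
  push_cast
  ring

theorem binomial_n_inv_n_cm
    (n : ℕ) (hn : 1 ≤ n) (F : Measure ℝ)
    (hF : F = ∑ k ∈ Finset.range (n + 1),
      ENNReal.ofReal ((n.choose k : ℝ) * (1 / n) ^ k * (1 - 1 / n) ^ (n - k)) •
        Measure.dirac (k : ℝ)) :
    ∃ (Ω : Type) (_ : MeasurableSpace Ω) (P : Measure Ω) (_ : IsProbabilityMeasure P)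
      (X : Fin n → Ω → ℝ), (∀ i, Measurable (X i)) ∧ (∀ i, P.map (X i) = F) ∧
      (∀ᵐ ω ∂P, ∑ i, X i ω = n * 1) := by
  haveI : NeZero n := ⟨by omega⟩
  letI m : MeasurableSpace (Fin n → Fin n) := ⊤
  set c : ℝ≥0∞ := ((n:ℝ≥0∞)^n)⁻¹ with hc
  refine ⟨Fin n → Fin n, m, c • ∑ ω : Fin n → Fin n, Measure.dirac ω, ?_,
    fun i ω => ((Finset.univ.filter fun j => ω j = i + j).card : ℝ), ?_, ?_, ?_⟩
  · constructor
    rw [Measure.smul_apply, Measure.finset_sum_apply]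
    simp only [measure_univ, Finset.sum_const, Finset.card_univ, Fintype.card_fun,
      Fintype.card_fin, smul_eq_mul, mul_one]
    rw [hc, nsmul_eq_mul, mul_one,
      show ((n^n : ℕ) : ℝ≥0∞) = ((n:ℝ≥0∞))^n by push_cast; ring]
    exact ENNReal.inv_mul_cancel (by positivity) (ENNReal.pow_ne_top (ENNReal.natCast_ne_top n))
  · intro i
    exact measurable_from_top
  · intro i
    have hXm : Measurable (fun ω : Fin n → Fin n =>
        ((Finset.univ.filter fun j => ω j = i + j).card : ℝ)) := measurable_from_top
    have hmap : ((c • ∑ ω : Fin n → Fin n, Measure.dirac ω).map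
        (fun ω : Fin n → Fin n => ((Finset.univ.filter fun j => ω j = i + j).card : ℝ)))
        = c • ∑ ω : Fin n → Fin n,
            Measure.dirac (((Finset.univ.filter fun j => ω j = i + j).card : ℝ)) := by
      ext s hs
      rw [Measure.map_apply hXm hs, Measure.smul_apply, Measure.smul_apply,
        Measure.finset_sum_apply, Measure.finset_sum_apply]
      congr 1
      refine Finset.sum_congr rfl fun ω _ => ?_
      rw [Measure.dirac_apply' _ (hXm hs), Measure.dirac_apply' _ hs]
      simp only [Set.indicator, Set.mem_preimage, Pi.one_apply]
      congr 1
    rw [hmap, hF]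
    have hregroup : (∑ ω : Fin n → Fin n,
        Measure.dirac (((Finset.univ.filter fun j => ω j = i + j).card : ℝ)))
        = ∑ k ∈ Finset.range (n+1),
            ((Finset.univ.filter fun ω : Fin n → Fin n =>
              (Finset.univ.filter fun j => ω j = i + j).card = k).card : ℝ≥0∞) •
              Measure.dirac ((k : ℕ) : ℝ) := by
      rw [← Finset.sum_fiberwise_of_maps_to
        (g := fun ω : Fin n → Fin n => (Finset.univ.filter fun j => ω j = i + j).card)
        (t := Finset.range (n+1))
        (fun ω _ => Finset.mem_range.mpr (Nat.lt_succ_of_le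
          (le_trans (Finset.card_filter_le _ _) (by simp))))
        (fun ω => Measure.dirac (((Finset.univ.filter fun j => ω j = i + j).card : ℝ)))]
      refine Finset.sum_congr rfl fun k _ => ?_
      rw [Finset.sum_congr rfl (fun ω hω => by
        rw [(Finset.mem_filter.mp hω).2]), Finset.sum_const, ← Nat.cast_smul_eq_nsmul ℝ≥0∞]
    rw [hregroup, Finset.smul_sum]
    refine Finset.sum_congr rfl fun k hk => ?_
    rw [smul_smul, count_agree n k (fun j => i + j), coeff_eq n k hn
      (Nat.lt_succ_iff.mp (Finset.mem_range.mp hk))]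
  · refine Filter.Eventually.of_forall fun ω => ?_
    have key : ∀ j : Fin n, (∑ i : Fin n, if ω j = i + j then (1:ℕ) else 0) = 1 := by
      intro j
      rw [Finset.sum_eq_single_of_mem (ω j - j) (Finset.mem_univ _)
        (fun i _ hi => by
          rw [if_neg]
          intro h
          exact hi (by rw [h, add_sub_cancel_right]))]
      rw [if_pos (by rw [sub_add_cancel])]
    calc ∑ i : Fin n, ((Finset.univ.filter fun j => ω j = i + j).card : ℝ)
        = ((∑ i : Fin n, (Finset.univ.filter fun j => ω j = i + j).card : ℕ) : ℝ) := by
          push_cast; ring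
      _ = ((∑ j : Fin n, ∑ i : Fin n, if ω j = i + j then (1:ℕ) else 0 : ℕ) : ℝ) := by
          rw [show (∑ i : Fin n, (Finset.univ.filter fun j => ω j = i + j).card)
            = ∑ i : Fin n, ∑ j : Fin n, if ω j = i + j then (1:ℕ) else 0 from
              Finset.sum_congr rfl fun i _ => Finset.card_filter _ _, Finset.sum_comm]
      _ = ((n : ℕ) : ℝ) := by
          rw [Finset.sum_congr rfl fun j _ => key j]
          simp
      _ = n * 1 := by ring
end

section
/- Suppose for each a in some index set there is an n-completely mixable distribution F_a on ℝ with common center μ, such that a ↦ F_a(x) is measurable for each x, and h is a probability measure on the index set. Then the mixture distribution F = ∫ F_a dh(a) is n-completely mixable with center μ. -/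
open MeasureTheory Set Filter Topology TopologicalSpace
open scoped ENNReal NNReal

set_option linter.unusedSectionVars false
set_option maxHeartbeats 1000000

namespace MixCM


variable {n : ℕ}

/-- Rational boxes in `Fin n → ℝ`. -/
abbrev Bx (n : ℕ) := (Fin n → ℚ) × (Fin n → ℚ)

def boxI (b : Bx n) : Set (Fin n → ℝ) :=
  Set.univ.pi fun i => Set.Ioo (b.1 i : ℝ) (b.2 i)

lemma isOpen_boxI (b : Bx n) : IsOpen (boxI b) :=
  isOpen_set_pi Set.finite_univ (fun _ _ => isOpen_Ioo)

def binter (b c : Bx n) : Bx n :=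
  (fun i => max (b.1 i) (c.1 i), fun i => min (b.2 i) (c.2 i))

lemma boxI_inter (b c : Bx n) : boxI b ∩ boxI c = boxI (binter b c) := by
  ext x
  simp only [boxI, binter, Set.mem_inter_iff, Set.mem_pi, Set.mem_univ, forall_true_left,
    Set.mem_Ioo, Rat.cast_max, Rat.cast_min, max_lt_iff, lt_min_iff]
  constructor
  · rintro ⟨h1, h2⟩ i
    exact ⟨⟨(h1 i).1, (h2 i).1⟩, ⟨(h1 i).2, (h2 i).2⟩⟩
  · intro hi
    exact ⟨fun i => ⟨(hi i).1.1, (hi i).2.1⟩, fun i => ⟨(hi i).1.2, (hi i).2.2⟩⟩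

def US (s : Finset (Bx n)) : Set (Fin n → ℝ) := ⋃ b ∈ s, boxI b

lemma isOpen_US (s : Finset (Bx n)) : IsOpen (US s) :=
  isOpen_biUnion fun b _ => isOpen_boxI b

lemma US_mono {s t : Finset (Bx n)} (hst : s ⊆ t) : US s ⊆ US t :=
  Set.biUnion_subset_biUnion_left hst

lemma US_union (s t : Finset (Bx n)) : US (s ∪ t) = US s ∪ US t := by
  ext x
  simp only [US, Set.mem_iUnion, Set.mem_union, Finset.mem_union, exists_prop]
  constructor
  · rintro ⟨b, hb | hb, hxb⟩
    · exact Or.inl ⟨b, hb, hxb⟩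
    · exact Or.inr ⟨b, hb, hxb⟩
  · rintro (⟨b, hb, hxb⟩ | ⟨b, hb, hxb⟩)
    · exact ⟨b, Or.inl hb, hxb⟩
    · exact ⟨b, Or.inr hb, hxb⟩

lemma US_inter (s t : Finset (Bx n)) :
    US s ∩ US t = US ((s ×ˢ t).image fun p => binter p.1 p.2) := by
  ext x
  simp only [US, Set.mem_inter_iff, Set.mem_iUnion, exists_prop]
  constructor
  · rintro ⟨⟨b, hb, hxb⟩, ⟨c, hc, hxc⟩⟩
    refine ⟨binter b c, ?_, ?_⟩
    · exact Finset.mem_image.2 ⟨(b, c), Finset.mem_product.2 ⟨hb, hc⟩, rfl⟩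
    · rw [← boxI_inter]; exact ⟨hxb, hxc⟩
  · rintro ⟨d, hd, hxd⟩
    obtain ⟨p, hp, rfl⟩ := Finset.mem_image.1 hd
    rw [← boxI_inter] at hxd
    have hp' := Finset.mem_product.1 hp
    exact ⟨⟨p.1, hp'.1, hxd.1⟩, ⟨p.2, hp'.2, hxd.2⟩⟩

lemma exists_box_subset {x : Fin n → ℝ} {W : Set (Fin n → ℝ)} (hW : IsOpen W) (hx : x ∈ W) :
    ∃ b : Bx n, x ∈ boxI b ∧ boxI b ⊆ W := by
  obtain ⟨ε, hε, hball⟩ := Metric.isOpen_iff.1 hW x hx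
  have hε2 : (0:ℝ) < ε / 2 := by linarith
  have hp : ∀ i : Fin n, ∃ p : ℚ, x i - ε / 2 < (p:ℝ) ∧ (p:ℝ) < x i := by
    intro i
    obtain ⟨p, hp1, hp2⟩ := exists_rat_btwn (show x i - ε/2 < x i by linarith)
    exact ⟨p, hp1, hp2⟩
  have hq : ∀ i : Fin n, ∃ q : ℚ, x i < (q:ℝ) ∧ (q:ℝ) < x i + ε / 2 := by
    intro i
    obtain ⟨q, hq1, hq2⟩ := exists_rat_btwn (show x i < x i + ε/2 by linarith)
    exact ⟨q, hq1, hq2⟩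
  choose p hp1 hp2 using hp
  choose q hq1 hq2 using hq
  refine ⟨(p, q), ?_, ?_⟩
  · simp only [boxI, Set.mem_pi, Set.mem_univ, forall_true_left, Set.mem_Ioo]
    exact fun i => ⟨hp2 i, hq1 i⟩
  · intro y hy
    simp only [boxI, Set.mem_pi, Set.mem_univ, forall_true_left, Set.mem_Ioo] at hy
    apply hball
    rw [Metric.mem_ball]
    have : dist y x < ε / 2 + ε / 4 := by
      rw [dist_pi_lt_iff (by linarith)]
      intro i
      rw [Real.dist_eq, abs_sub_lt_iff]
      have h1 := (hy i).1
      have h2 := (hy i).2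
      have h3 := hp1 i
      have h4 := hq2 i
      constructor <;> linarith
    linarith

lemma exists_US_between {K W : Set (Fin n → ℝ)} (hK : IsCompact K) (hW : IsOpen W)
    (hKW : K ⊆ W) : ∃ s : Finset (Bx n), K ⊆ US s ∧ US s ⊆ W := by
  classical
  obtain ⟨u, hu⟩ := hK.elim_finite_subcover (fun b : {b : Bx n // boxI b ⊆ W} => boxI b.1)
    (fun b => isOpen_boxI b.1) (by
      intro x hx
      obtain ⟨b, hxb, hbW⟩ := exists_box_subset hW (hKW hx)
      exact Set.mem_iUnion.2 ⟨⟨b, hbW⟩, hxb⟩)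
  refine ⟨u.image Subtype.val, ?_, ?_⟩
  · intro x hx
    obtain ⟨b, hb, hxb⟩ := Set.mem_iUnion₂.1 (hu hx)
    exact Set.mem_iUnion₂.2 ⟨b.1, Finset.mem_image_of_mem _ hb, hxb⟩
  · intro x hx
    obtain ⟨b, hb, hxb⟩ := Set.mem_iUnion₂.1 hx
    obtain ⟨c, _, rfl⟩ := Finset.mem_image.1 hb
    exact c.2 hxb

lemma exists_US_disjoint {K₁ K₂ : Set (Fin n → ℝ)} (h₁ : IsCompact K₁) (h₂ : IsCompact K₂)
    (hd : Disjoint K₁ K₂) :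
    ∃ s t : Finset (Bx n), K₁ ⊆ US s ∧ K₂ ⊆ US t ∧ Disjoint (US s) (US t) := by
  obtain ⟨U, V', hU, hV, hKU, hKV, hUV⟩ := SeparatedNhds.of_isCompact_isCompact h₁ h₂ hd
  obtain ⟨s, hs1, hs2⟩ := exists_US_between h₁ hU hKU
  obtain ⟨t, ht1, ht2⟩ := exists_US_between h₂ hV hKV
  exact ⟨s, t, hs1, ht1, hUV.mono hs2 ht2⟩



noncomputable def UF : Ultrafilter ℕ := Filter.hyperfilter ℕ

lemma UF_le_atTop : (UF : Filter ℕ) ≤ Filter.atTop := Nat.hyperfilter_le_atTop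

lemma exists_lim (f : ℕ → ℝ≥0∞) : ∃ x, Filter.Tendsto f UF (𝓝 x) := by
  obtain ⟨x, -, hx⟩ := (isCompact_univ : IsCompact (Set.univ : Set ℝ≥0∞)).ultrafilter_le_nhds
    (UF.map f) (by simp)
  exact ⟨x, hx⟩

noncomputable def LL (f : ℕ → ℝ≥0∞) : ℝ≥0∞ := (exists_lim f).choose

lemma tendsto_LL (f : ℕ → ℝ≥0∞) : Filter.Tendsto f UF (𝓝 (LL f)) := (exists_lim f).choose_spec

lemma LL_eq_of_tendsto {f : ℕ → ℝ≥0∞} {c : ℝ≥0∞} (hf : Filter.Tendsto f Filter.atTop (𝓝 c)) :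
    LL f = c :=
  tendsto_nhds_unique (tendsto_LL f) (hf.mono_left UF_le_atTop)

lemma LL_const (c : ℝ≥0∞) : LL (fun _ => c) = c := LL_eq_of_tendsto tendsto_const_nhds

lemma LL_mono' {f g : ℕ → ℝ≥0∞} (hfg : ∀ᶠ k in (UF : Filter ℕ), f k ≤ g k) : LL f ≤ LL g :=
  le_of_tendsto_of_tendsto (tendsto_LL f) (tendsto_LL g) hfg

lemma LL_mono {f g : ℕ → ℝ≥0∞} (hfg : ∀ k, f k ≤ g k) : LL f ≤ LL g :=
  LL_mono' (Filter.Eventually.of_forall hfg)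

lemma LL_add (f g : ℕ → ℝ≥0∞) : LL (fun k => f k + g k) = LL f + LL g :=
  tendsto_nhds_unique (tendsto_LL _) ((tendsto_LL f).add (tendsto_LL g))

lemma LL_le_const {f : ℕ → ℝ≥0∞} {c : ℝ≥0∞} (hf : ∀ k, f k ≤ c) : LL f ≤ c :=
  le_of_tendsto (tendsto_LL f) (Filter.Eventually.of_forall hf)

lemma const_le_LL {f : ℕ → ℝ≥0∞} {c : ℝ≥0∞} (hf : ∀ k, c ≤ f k) : c ≤ LL f :=
  ge_of_tendsto (tendsto_LL f) (Filter.Eventually.of_forall hf)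



variable {n : ℕ} {μ : ℝ} {A : Type*} [MeasurableSpace A]

def SumSet (n : ℕ) (μ : ℝ) : Set (Fin n → ℝ) := {x | ∑ i, x i = n * μ}

lemma measurable_sumfun : Measurable (fun x : Fin n → ℝ => ∑ i, x i) :=
  Finset.measurable_sum _ fun i _ => measurable_pi_apply i

lemma measurableSet_sumSet : MeasurableSet (SumSet n μ) := by
  have : SumSet n μ = (fun x : Fin n → ℝ => ∑ i, x i) ⁻¹' {(n : ℝ) * μ} := rfl
  rw [this]
  exact measurable_sumfun (measurableSet_singleton _)

variable (F : A → Measure ℝ) [∀ a, IsProbabilityMeasure (F a)]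

lemma exists_coupling
    (hCM : ∀ a : A, ∃ (Ω : Type) (_ : MeasurableSpace Ω) (P : Measure Ω)
      (_ : IsProbabilityMeasure P) (X : Fin n → Ω → ℝ),
      (∀ i, Measurable (X i)) ∧ (∀ i, P.map (X i) = F a) ∧
      (∀ᵐ ω ∂P, ∑ i, X i ω = n * μ)) (a : A) :
    ∃ Q : Measure (Fin n → ℝ), IsProbabilityMeasure Q ∧
      (∀ i, Q.map (fun x => x i) = F a) ∧ Q (SumSet n μ)ᶜ = 0 := by
  obtain ⟨Ω, mΩ, P, hP, X, hXm, hXd, hXs⟩ := hCM a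
  have hT : Measurable (fun ω i => X i ω : Ω → Fin n → ℝ) :=
    measurable_pi_lambda _ fun i => hXm i
  refine ⟨P.map (fun ω i => X i ω), Measure.isProbabilityMeasure_map hT.aemeasurable, ?_, ?_⟩
  · intro i
    rw [Measure.map_map (measurable_pi_apply i) hT]
    exact hXd i
  · rw [Measure.map_apply hT measurableSet_sumSet.compl]
    have : (fun ω i => X i ω) ⁻¹' (SumSet n μ)ᶜ = {ω | ¬ (∑ i, X i ω = n * μ)} := rfl
    rw [this, ← MeasureTheory.ae_iff.symm] at *
    exact hXs

variable (hCM : ∀ a : A, ∃ (Ω : Type) (_ : MeasurableSpace Ω) (P : Measure Ω)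
      (_ : IsProbabilityMeasure P) (X : Fin n → Ω → ℝ),
      (∀ i, Measurable (X i)) ∧ (∀ i, P.map (X i) = F a) ∧
      (∀ᵐ ω ∂P, ∑ i, X i ω = n * μ))

noncomputable def Qc (a : A) : Measure (Fin n → ℝ) := (exists_coupling F hCM a).choose

lemma Qc_prob (a : A) : IsProbabilityMeasure (Qc F hCM a) :=
  (exists_coupling F hCM a).choose_spec.1

lemma Qc_marg (a : A) (i : Fin n) : (Qc F hCM a).map (fun x => x i) = F a :=
  (exists_coupling F hCM a).choose_spec.2.1 i

lemma Qc_null (a : A) : Qc F hCM a (SumSet n μ)ᶜ = 0 :=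
  (exists_coupling F hCM a).choose_spec.2.2

lemma Qc_eval (a : A) (i : Fin n) {S : Set ℝ} (hS : MeasurableSet S) :
    Qc F hCM a ((fun x => x i) ⁻¹' S) = F a S := by
  rw [← Qc_marg F hCM a i, Measure.map_apply (measurable_pi_apply i) hS]

/-! ### rational enumeration and discretization -/

noncomputable def qe : ℕ → ℚ := fun m => (Denumerable.eqv ℚ).symm m

lemma qe_surj (q : ℚ) : ∃ j : ℕ, qe j = q :=
  ⟨Denumerable.eqv ℚ q, Equiv.symm_apply_apply _ _⟩

noncomputable def flo (k : ℕ) (r : ℝ) : ℕ := min ⌊r * k⌋₊ k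

lemma measurable_flo (k : ℕ) : Measurable (flo k) :=
  (Nat.measurable_floor.comp (measurable_id.mul_const _)).min measurable_const

lemma flo_eq_imp {k : ℕ} (hk : 1 ≤ k) {x y : ℝ} (hx0 : 0 ≤ x) (hx1 : x ≤ 1)
    (hy0 : 0 ≤ y) (hy1 : y ≤ 1) (he : flo k x = flo k y) : x ≤ y + 1 / k := by
  have hkR : (0:ℝ) < k := by exact_mod_cast hk
  have hfx : flo k x = ⌊x * k⌋₊ := by
    apply min_eq_left
    calc ⌊x * k⌋₊ ≤ ⌊(k:ℝ)⌋₊ := Nat.floor_le_floor (by nlinarith)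
    _ = k := Nat.floor_natCast k
  have hfy : flo k y = ⌊y * k⌋₊ := by
    apply min_eq_left
    calc ⌊y * k⌋₊ ≤ ⌊(k:ℝ)⌋₊ := Nat.floor_le_floor (by nlinarith)
    _ = k := Nat.floor_natCast k
  rw [hfx, hfy] at he
  have h1 : x * k < ⌊x * k⌋₊ + 1 := Nat.lt_floor_add_one _
  have h2 : (⌊y * k⌋₊ : ℝ) ≤ y * k := Nat.floor_le (by positivity)
  rw [he] at h1
  have : x * k < y * k + 1 := lt_of_lt_of_le h1 (by linarith)
  have h3 : x ≤ (y * k + 1) / k := by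
    rw [le_div_iff₀ hkR]; linarith
  have h4 : (y * k + 1) / k = y + 1 / k := by field_simp
  linarith

noncomputable def eps (k : ℕ) : ℝ≥0∞ := ENNReal.ofReal (1 / (k : ℝ))

lemma tendsto_eps : Filter.Tendsto eps Filter.atTop (𝓝 0) := by
  have : Filter.Tendsto (fun k : ℕ => (1 : ℝ) / k) Filter.atTop (𝓝 0) :=
    tendsto_one_div_atTop_nhds_zero_nat
  have h2 := (ENNReal.continuous_ofReal.tendsto 0).comp this
  simp only [Function.comp_def, ENNReal.ofReal_zero] at h2
  exact h2

def toFin (k m : ℕ) : Fin (k + 1) := ⟨m % (k + 1), Nat.mod_lt _ (Nat.succ_pos k)⟩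

lemma toFin_inj {k m m' : ℕ} (hm : m ≤ k) (hm' : m' ≤ k) (he : toFin k m = toFin k m') :
    m = m' := by
  have := Fin.mk.inj_iff.1 he
  rwa [Nat.mod_eq_of_lt (Nat.lt_succ_of_le hm), Nat.mod_eq_of_lt (Nat.lt_succ_of_le hm')] at this

noncomputable def Phi (k : ℕ) (a : A) : Fin k → Fin (k + 1) := fun j =>
  toFin k (flo k ((F a (Set.Iic (qe j : ℝ))).toReal))

lemma measurable_Phi (hmeas : ∀ x : ℝ, Measurable fun a => F a (Set.Iic x)) (k : ℕ) :
    Measurable (Phi F k) := by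
  apply measurable_pi_lambda
  intro j
  exact (measurable_from_top (f := toFin k)).comp
    ((measurable_flo k).comp (ENNReal.measurable_toReal.comp (hmeas _)))

instance instMSCpi {k m : ℕ} : MeasurableSingletonClass (Fin k → Fin (m + 1)) := by
  constructor
  intro g
  have : ({g} : Set (Fin k → Fin (m+1))) = ⋂ j, (fun f => f j) ⁻¹' {g j} := by
    ext f
    simp [funext_iff]
  rw [this]
  exact MeasurableSet.iInter fun j => measurable_pi_apply j (measurableSet_singleton _)

lemma measurableSet_cell (hmeas : ∀ x : ℝ, Measurable fun a => F a (Set.Iic x)) {k : ℕ}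
    (g : Fin k → Fin (k + 1)) : MeasurableSet (Phi F k ⁻¹' {g}) :=
  measurable_Phi F hmeas k (measurableSet_singleton g)

variable [Nonempty A]

open scoped Classical in
noncomputable def rep (k : ℕ) (g : Fin k → Fin (k + 1)) : A :=
  if hne : ∃ a, Phi F k a = g then hne.choose else Classical.arbitrary A

lemma Phi_rep {k : ℕ} {g : Fin k → Fin (k + 1)} (hg : ∃ a, Phi F k a = g) :
    Phi F k (rep F k g) = g := by
  rw [rep, dif_pos hg]
  exact hg.choose_spec

/-- key closeness estimate -/
lemma F_rep_close (hk : 1 ≤ k) (a : A) (j : Fin k) :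
    F (rep F k (Phi F k a)) (Set.Iic (qe j : ℝ)) ≤ F a (Set.Iic (qe j : ℝ)) + eps k ∧
    F a (Set.Iic (qe j : ℝ)) ≤ F (rep F k (Phi F k a)) (Set.Iic (qe j : ℝ)) + eps k := by
  set a' := rep F k (Phi F k a) with ha'
  have hpp : Phi F k a' = Phi F k a := Phi_rep F ⟨a, rfl⟩
  have hco : flo k ((F a' (Set.Iic (qe j : ℝ))).toReal) =
      flo k ((F a (Set.Iic (qe j : ℝ))).toReal) := by
    have := congrFun hpp j
    exact toFin_inj (min_le_right _ _) (min_le_right _ _) this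
  set x := (F a' (Set.Iic (qe j : ℝ))).toReal with hx
  set y := (F a (Set.Iic (qe j : ℝ))).toReal with hy
  have hx0 : 0 ≤ x := ENNReal.toReal_nonneg
  have hy0 : 0 ≤ y := ENNReal.toReal_nonneg
  have hx1 : x ≤ 1 := by
    rw [hx]
    exact ENNReal.toReal_le_of_le_ofReal one_pos.le (by simpa using prob_le_one)
  have hy1 : y ≤ 1 := by
    rw [hy]
    exact ENNReal.toReal_le_of_le_ofReal one_pos.le (by simpa using prob_le_one)
  have e1 : F a' (Set.Iic (qe j : ℝ)) = ENNReal.ofReal x :=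
    (ENNReal.ofReal_toReal (measure_ne_top _ _)).symm
  have e2 : F a (Set.Iic (qe j : ℝ)) = ENNReal.ofReal y :=
    (ENNReal.ofReal_toReal (measure_ne_top _ _)).symm
  constructor
  · rw [e1, e2]
    calc ENNReal.ofReal x ≤ ENNReal.ofReal (y + 1 / k) :=
          ENNReal.ofReal_le_ofReal (flo_eq_imp hk hx0 hx1 hy0 hy1 hco)
    _ = ENNReal.ofReal y + eps k := ENNReal.ofReal_add hy0 (by positivity)
  · rw [e1, e2]
    calc ENNReal.ofReal y ≤ ENNReal.ofReal (x + 1 / k) :=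
          ENNReal.ofReal_le_ofReal (flo_eq_imp hk hy0 hy1 hx0 hx1 hco.symm)
    _ = ENNReal.ofReal x + eps k := ENNReal.ofReal_add hx0 (by positivity)


variable (h : Measure A) [IsProbabilityMeasure h]

noncomputable def Gk (k : ℕ) : Measure ℝ :=
  ∑ g : Fin k → Fin (k + 1), h (Phi F k ⁻¹' {g}) • F (rep F k g)

noncomputable def Qk (k : ℕ) : Measure (Fin n → ℝ) :=
  ∑ g : Fin k → Fin (k + 1), h (Phi F k ⁻¹' {g}) • Qc F hCM (rep F k g)

lemma Gk_apply (k : ℕ) (S : Set ℝ) :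
    Gk F h k S = ∑ g : Fin k → Fin (k + 1), h (Phi F k ⁻¹' {g}) * F (rep F k g) S := by
  rw [Gk, Measure.finset_sum_apply]
  simp [Measure.smul_apply, smul_eq_mul]

lemma Qk_apply (k : ℕ) (S : Set (Fin n → ℝ)) :
    Qk F hCM h k S =
      ∑ g : Fin k → Fin (k + 1), h (Phi F k ⁻¹' {g}) * Qc F hCM (rep F k g) S := by
  rw [Qk, Measure.finset_sum_apply]
  simp [Measure.smul_apply, smul_eq_mul]

lemma lintegral_cell (hmeas : ∀ x : ℝ, Measurable fun a => F a (Set.Iic x)) (k : ℕ)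
    (c : (Fin k → Fin (k + 1)) → ℝ≥0∞) :
    ∫⁻ a, c (Phi F k a) ∂h = ∑ g : Fin k → Fin (k + 1), h (Phi F k ⁻¹' {g}) * c g := by
  have hc : Measurable c := .of_discrete
  rw [← lintegral_map hc (measurable_Phi F hmeas k), lintegral_fintype]
  refine Finset.sum_congr rfl fun g _ => ?_
  rw [Measure.map_apply (measurable_Phi F hmeas k) (measurableSet_singleton g), mul_comm]

lemma Gk_err (hmeas : ∀ x : ℝ, Measurable fun a => F a (Set.Iic x)) {k : ℕ}
    (hk : 1 ≤ k) (j : Fin k) :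
    Gk F h k (Set.Iic (qe j : ℝ)) ≤ (∫⁻ a, F a (Set.Iic (qe j : ℝ)) ∂h) + eps k ∧
    (∫⁻ a, F a (Set.Iic (qe j : ℝ)) ∂h) ≤ Gk F h k (Set.Iic (qe j : ℝ)) + eps k := by
  have key : Gk F h k (Set.Iic (qe j : ℝ)) =
      ∫⁻ a, F (rep F k (Phi F k a)) (Set.Iic (qe j : ℝ)) ∂h := by
    rw [lintegral_cell F h hmeas k (fun g => F (rep F k g) (Set.Iic (qe j : ℝ))),
      Gk_apply]
  constructor
  · rw [key]
    calc ∫⁻ a, F (rep F k (Phi F k a)) (Set.Iic (qe j : ℝ)) ∂h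
        ≤ ∫⁻ a, (F a (Set.Iic (qe j : ℝ)) + eps k) ∂h :=
          lintegral_mono fun a => (F_rep_close F hk a j).1
      _ = (∫⁻ a, F a (Set.Iic (qe j : ℝ)) ∂h) + eps k := by
          rw [lintegral_add_right _ measurable_const, lintegral_const, measure_univ, mul_one]
  · rw [key]
    calc ∫⁻ a, F a (Set.Iic (qe j : ℝ)) ∂h
        ≤ ∫⁻ a, (F (rep F k (Phi F k a)) (Set.Iic (qe j : ℝ)) + eps k) ∂h :=
          lintegral_mono fun a => (F_rep_close F hk a j).2
      _ = (∫⁻ a, F (rep F k (Phi F k a)) (Set.Iic (qe j : ℝ)) ∂h) + eps k := by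
          rw [lintegral_add_right _ measurable_const, lintegral_const, measure_univ, mul_one]

lemma Qk_univ (hmeas : ∀ x : ℝ, Measurable fun a => F a (Set.Iic x)) (k : ℕ) :
    Qk F hCM h k Set.univ = 1 := by
  rw [Qk_apply]
  have : ∀ g : Fin k → Fin (k + 1), Qc F hCM (rep F k g) Set.univ = 1 := fun g =>
    (Qc_prob F hCM (rep F k g)).measure_univ
  simp_rw [this, mul_one]
  rw [sum_measure_preimage_singleton Finset.univ (fun g _ => measurableSet_cell F hmeas g)]
  simp [measure_univ]

lemma Qk_null (k : ℕ) : Qk F hCM h k (SumSet n μ)ᶜ = 0 := by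
  rw [Qk_apply]
  simp [Qc_null F hCM]

lemma Qk_eval (k : ℕ) (i : Fin n) {S : Set ℝ} (hS : MeasurableSet S) :
    Qk F hCM h k ((fun x => x i) ⁻¹' S) = Gk F h k S := by
  rw [Qk_apply, Gk_apply]
  exact Finset.sum_congr rfl fun g _ => by rw [Qc_eval F hCM _ i hS]


/-! ### Layer 4: the limit content and its measure -/

lemma Gk_univ (hmeas : ∀ x : ℝ, Measurable fun a => F a (Set.Iic x)) (k : ℕ) :
    Gk F h k Set.univ = 1 := by
  rw [Gk_apply]
  have : ∀ g : Fin k → Fin (k + 1), F (rep F k g) Set.univ = 1 := fun g => measure_univ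
  simp_rw [this, mul_one]
  rw [sum_measure_preimage_singleton Finset.univ (fun g _ => measurableSet_cell F hmeas g)]
  simp [measure_univ]

lemma Gk_le_one (hmeas : ∀ x : ℝ, Measurable fun a => F a (Set.Iic x)) (k : ℕ) (S : Set ℝ) :
    Gk F h k S ≤ 1 := by
  rw [← Gk_univ F h hmeas k]
  exact measure_mono (Set.subset_univ S)

lemma Qk_le_one (hmeas : ∀ x : ℝ, Measurable fun a => F a (Set.Iic x)) (k : ℕ)
    (S : Set (Fin n → ℝ)) : Qk F hCM h k S ≤ 1 := by
  rw [← Qk_univ F hCM h hmeas k]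
  exact measure_mono (Set.subset_univ S)

lemma Gk_Ioi (hmeas : ∀ x : ℝ, Measurable fun a => F a (Set.Iic x)) (k : ℕ) (w : ℝ) :
    Gk F h k (Set.Ioi w) = 1 - Gk F h k (Set.Iic w) := by
  have hadd : Gk F h k (Set.Iic w) + Gk F h k (Set.Ioi w) = 1 := by
    rw [← Set.compl_Iic, measure_add_measure_compl measurableSet_Iic, Gk_univ F h hmeas]
  refine ENNReal.eq_sub_of_add_eq ?_ (by rw [add_comm] at hadd; exact hadd)
  exact (lt_of_le_of_lt (Gk_le_one F h hmeas k _) ENNReal.one_lt_top).ne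

/-- `LL` of one minus a `[0,1]`-valued sequence. -/
lemma LL_one_sub {g : ℕ → ℝ≥0∞} (hg : ∀ k, g k ≤ 1) :
    LL (fun k => 1 - g k) = 1 - LL g := by
  have hsum : (fun k => (1 - g k) + g k) = fun _ => (1:ℝ≥0∞) := by
    funext k
    exact tsub_add_cancel_of_le (hg k)
  have h1 : LL (fun k => 1 - g k) + LL g = 1 := by
    rw [← LL_add, hsum, LL_const]
  refine ENNReal.eq_sub_of_add_eq ?_ h1
  exact (lt_of_le_of_lt (LL_le_const hg) ENNReal.one_lt_top).ne

/-- The `LL`-limit of `Gk (Iic q)` equals the mixture value, for every rational `q`. -/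
lemma LL_Gk_Iic (hmeas : ∀ x : ℝ, Measurable fun a => F a (Set.Iic x)) (q : ℚ) :
    LL (fun k => Gk F h k (Set.Iic (q : ℝ))) = ∫⁻ a, F a (Set.Iic (q : ℝ)) ∂h := by
  obtain ⟨j0, hj0⟩ := qe_surj q
  set I := ∫⁻ a, F a (Set.Iic (q : ℝ)) ∂h with hI
  have hup : ∀ᶠ k in (UF : Filter ℕ), Gk F h k (Set.Iic (q : ℝ)) ≤ I + eps k := by
    refine Filter.Eventually.filter_mono UF_le_atTop ?_
    rw [Filter.eventually_atTop]
    refine ⟨j0 + 1, fun k hk => ?_⟩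
    have hj : j0 < k := by omega
    have := (Gk_err F h hmeas (by omega : 1 ≤ k) ⟨j0, hj⟩).1
    simpa [hj0] using this
  have hlo : ∀ᶠ k in (UF : Filter ℕ), I ≤ Gk F h k (Set.Iic (q : ℝ)) + eps k := by
    refine Filter.Eventually.filter_mono UF_le_atTop ?_
    rw [Filter.eventually_atTop]
    refine ⟨j0 + 1, fun k hk => ?_⟩
    have hj : j0 < k := by omega
    have := (Gk_err F h hmeas (by omega : 1 ≤ k) ⟨j0, hj⟩).2
    simpa [hj0] using this
  have heps : LL eps = 0 := LL_eq_of_tendsto tendsto_eps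
  have upper : LL (fun k => Gk F h k (Set.Iic (q : ℝ))) ≤ I := by
    calc LL (fun k => Gk F h k (Set.Iic (q : ℝ))) ≤ LL (fun k => I + eps k) := LL_mono' hup
    _ = I + LL eps := by rw [← LL_const I, ← LL_add, LL_const]
    _ = I := by rw [heps, add_zero]
  have lower : I ≤ LL (fun k => Gk F h k (Set.Iic (q : ℝ))) := by
    calc I = LL (fun _ => I) := (LL_const I).symm
    _ ≤ LL (fun k => Gk F h k (Set.Iic (q : ℝ)) + eps k) := LL_mono' hlo
    _ = LL (fun k => Gk F h k (Set.Iic (q : ℝ))) + LL eps := LL_add _ _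
    _ = _ := by rw [heps, add_zero]
  exact le_antisymm upper lower

/-- The content-to-be, as an `ℝ≥0∞`-valued function on compact sets. -/
noncomputable def lamE (K : Compacts (Fin n → ℝ)) : ℝ≥0∞ :=
  ⨅ s : {s : Finset (Bx n) // (K : Set (Fin n → ℝ)) ⊆ US s},
    LL (fun k => Qk F hCM h k (US s.1))

lemma lamE_le_LL {K : Compacts (Fin n → ℝ)} {s : Finset (Bx n)}
    (hs : (K : Set (Fin n → ℝ)) ⊆ US s) :
    lamE F hCM h K ≤ LL (fun k => Qk F hCM h k (US s)) :=
  iInf_le (fun s : {s : Finset (Bx n) // (K : Set (Fin n → ℝ)) ⊆ US s} =>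
    LL (fun k => Qk F hCM h k (US s.1))) ⟨s, hs⟩

lemma lamE_le_one (hmeas : ∀ x : ℝ, Measurable fun a => F a (Set.Iic x))
    (K : Compacts (Fin n → ℝ)) : lamE F hCM h K ≤ 1 := by
  obtain ⟨s, hs, -⟩ := exists_US_between K.isCompact isOpen_univ (Set.subset_univ _)
  exact le_trans (lamE_le_LL F hCM h hs) (LL_le_const fun k => Qk_le_one F hCM h hmeas k _)

lemma lamE_ne_top (hmeas : ∀ x : ℝ, Measurable fun a => F a (Set.Iic x))
    (K : Compacts (Fin n → ℝ)) : lamE F hCM h K ≠ ∞ :=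
  (lt_of_le_of_lt (lamE_le_one F hCM h hmeas K) ENNReal.one_lt_top).ne

lemma lamE_mono {K₁ K₂ : Compacts (Fin n → ℝ)} (hK : (K₁ : Set (Fin n → ℝ)) ⊆ K₂) :
    lamE F hCM h K₁ ≤ lamE F hCM h K₂ :=
  le_iInf fun s => lamE_le_LL F hCM h (hK.trans s.2)

lemma lamE_sup_le (K₁ K₂ : Compacts (Fin n → ℝ)) :
    lamE F hCM h (K₁ ⊔ K₂) ≤ lamE F hCM h K₁ + lamE F hCM h K₂ := by
  have key : ∀ (s₁ : {s : Finset (Bx n) // (K₁ : Set (Fin n → ℝ)) ⊆ US s})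
      (s₂ : {s : Finset (Bx n) // (K₂ : Set (Fin n → ℝ)) ⊆ US s}),
      lamE F hCM h (K₁ ⊔ K₂) ≤
        LL (fun k => Qk F hCM h k (US s₁.1)) + LL (fun k => Qk F hCM h k (US s₂.1)) := by
    rintro ⟨s₁, hs₁⟩ ⟨s₂, hs₂⟩
    have hsub : ((K₁ ⊔ K₂ : Compacts (Fin n → ℝ)) : Set (Fin n → ℝ)) ⊆ US (s₁ ∪ s₂) := by
      rw [US_union]
      exact Set.union_subset_union hs₁ hs₂
    refine le_trans (lamE_le_LL F hCM h hsub) ?_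
    rw [← LL_add]
    refine LL_mono fun k => ?_
    rw [US_union]
    exact measure_union_le _ _
  calc lamE F hCM h (K₁ ⊔ K₂)
      ≤ ⨅ s₁ : {s : Finset (Bx n) // (K₁ : Set (Fin n → ℝ)) ⊆ US s},
        ⨅ s₂ : {s : Finset (Bx n) // (K₂ : Set (Fin n → ℝ)) ⊆ US s},
        (LL (fun k => Qk F hCM h k (US s₁.1)) + LL (fun k => Qk F hCM h k (US s₂.1))) :=
        le_iInf fun s₁ => le_iInf fun s₂ => key s₁ s₂
    _ = lamE F hCM h K₁ + lamE F hCM h K₂ := by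
        rw [lamE, lamE, ENNReal.iInf_add]
        exact iInf_congr fun s₁ => by rw [ENNReal.add_iInf]

lemma lamE_sup_disjoint (K₁ K₂ : Compacts (Fin n → ℝ))
    (hd : Disjoint (K₁ : Set (Fin n → ℝ)) K₂) :
    lamE F hCM h (K₁ ⊔ K₂) = lamE F hCM h K₁ + lamE F hCM h K₂ := by
  refine le_antisymm (lamE_sup_le F hCM h K₁ K₂) ?_
  obtain ⟨t₁, t₂, ht₁, ht₂, htd⟩ := exists_US_disjoint K₁.isCompact K₂.isCompact hd
  refine le_iInf ?_
  rintro ⟨s, hs⟩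
  set s₁ := (s ×ˢ t₁).image fun p => binter p.1 p.2 with hs₁def
  set s₂ := (s ×ˢ t₂).image fun p => binter p.1 p.2 with hs₂def
  have hUS₁ : US s₁ = US s ∩ US t₁ := (US_inter s t₁).symm
  have hUS₂ : US s₂ = US s ∩ US t₂ := (US_inter s t₂).symm
  have hK₁s : (K₁ : Set (Fin n → ℝ)) ⊆ US s₁ := by
    rw [hUS₁]
    exact Set.subset_inter (le_trans le_sup_left hs : (K₁ : Set (Fin n → ℝ)) ⊆ US s) ht₁
  have hK₂s : (K₂ : Set (Fin n → ℝ)) ⊆ US s₂ := by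
    rw [hUS₂]
    exact Set.subset_inter (le_trans le_sup_right hs : (K₂ : Set (Fin n → ℝ)) ⊆ US s) ht₂
  have hdisj : Disjoint (US s₁) (US s₂) := by
    rw [hUS₁, hUS₂]
    exact (htd.mono Set.inter_subset_right Set.inter_subset_right)
  have hpoint : ∀ k, Qk F hCM h k (US s₁) + Qk F hCM h k (US s₂) ≤ Qk F hCM h k (US s) := by
    intro k
    rw [← measure_union hdisj (isOpen_US s₂).measurableSet]
    refine measure_mono ?_
    rw [hUS₁, hUS₂]
    exact Set.union_subset Set.inter_subset_left Set.inter_subset_left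
  calc lamE F hCM h K₁ + lamE F hCM h K₂
      ≤ LL (fun k => Qk F hCM h k (US s₁)) + LL (fun k => Qk F hCM h k (US s₂)) :=
        add_le_add (lamE_le_LL F hCM h hK₁s) (lamE_le_LL F hCM h hK₂s)
    _ = LL (fun k => Qk F hCM h k (US s₁) + Qk F hCM h k (US s₂)) := (LL_add _ _).symm
    _ ≤ LL (fun k => Qk F hCM h k (US s)) := LL_mono hpoint

/-! ### Layer 5: the measure `nu` -/

noncomputable def conF (hmeas : ∀ x : ℝ, Measurable fun a => F a (Set.Iic x)) :
    Content (Fin n → ℝ) where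
  toFun K := (lamE F hCM h K).toNNReal
  mono' K₁ K₂ hK :=
    ENNReal.toNNReal_mono (lamE_ne_top F hCM h hmeas K₂) (lamE_mono F hCM h hK)
  sup_disjoint' K₁ K₂ hd _ _ := by
    have h1 := congrArg ENNReal.toNNReal (lamE_sup_disjoint F hCM h K₁ K₂ hd)
    rwa [ENNReal.toNNReal_add (lamE_ne_top F hCM h hmeas K₁)
      (lamE_ne_top F hCM h hmeas K₂)] at h1
  sup_le' K₁ K₂ := by
    have h2 : (lamE F hCM h (K₁ ⊔ K₂)).toNNReal ≤ (lamE F hCM h K₁ + lamE F hCM h K₂).toNNReal :=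
      ENNReal.toNNReal_mono
        (ENNReal.add_ne_top.2 ⟨lamE_ne_top F hCM h hmeas K₁, lamE_ne_top F hCM h hmeas K₂⟩)
        (lamE_sup_le F hCM h K₁ K₂)
    rwa [ENNReal.toNNReal_add (lamE_ne_top F hCM h hmeas K₁)
      (lamE_ne_top F hCM h hmeas K₂)] at h2

noncomputable def nu (hmeas : ∀ x : ℝ, Measurable fun a => F a (Set.Iic x)) :
    Measure (Fin n → ℝ) := (conF F hCM h hmeas).measure

lemma coe_conF (hmeas : ∀ x : ℝ, Measurable fun a => F a (Set.Iic x))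
    (K : Compacts (Fin n → ℝ)) :
    (conF F hCM h hmeas) K = lamE F hCM h K :=
  ENNReal.coe_toNNReal (lamE_ne_top F hCM h hmeas K)

lemma nu_open (hmeas : ∀ x : ℝ, Measurable fun a => F a (Set.Iic x))
    {W : Set (Fin n → ℝ)} (hW : IsOpen W) :
    nu F hCM h hmeas W =
      ⨆ (K : Compacts (Fin n → ℝ)) (_ : (K : Set (Fin n → ℝ)) ⊆ W), lamE F hCM h K := by
  calc nu F hCM h hmeas W = (conF F hCM h hmeas).outerMeasure W :=
        Content.measure_apply _ hW.measurableSet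
  _ = (conF F hCM h hmeas).innerContent ⟨W, hW⟩ :=
        (conF F hCM h hmeas).outerMeasure_opens ⟨W, hW⟩
  _ = ⨆ (K : Compacts (Fin n → ℝ)) (_ : (K : Set (Fin n → ℝ)) ⊆ W), lamE F hCM h K := by
        rw [Content.innerContent]
        exact iSup_congr fun K => iSup_congr fun _ => coe_conF F hCM h hmeas K

lemma nu_le_of_open (hmeas : ∀ x : ℝ, Measurable fun a => F a (Set.Iic x))
    {W : Set (Fin n → ℝ)} (hW : IsOpen W) {c : ℕ → ℝ≥0∞}
    (hc : ∀ k, Qk F hCM h k W ≤ c k) :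
    nu F hCM h hmeas W ≤ LL c := by
  rw [nu_open F hCM h hmeas hW]
  refine iSup₂_le fun K hK => ?_
  obtain ⟨s, hs1, hs2⟩ := exists_US_between K.isCompact hW hK
  refine le_trans (lamE_le_LL F hCM h hs1) (LL_mono fun k => ?_)
  exact le_trans (measure_mono hs2) (hc k)

lemma nu_univ_le (hmeas : ∀ x : ℝ, Measurable fun a => F a (Set.Iic x)) :
    nu F hCM h hmeas Set.univ ≤ 1 := by
  have := nu_le_of_open F hCM h hmeas isOpen_univ
    (c := fun _ => 1) (fun k => Qk_le_one F hCM h hmeas k _)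
  rwa [LL_const] at this

lemma isOpen_stripLT (i : Fin n) (r : ℝ) : IsOpen {x : Fin n → ℝ | x i < r} :=
  isOpen_lt (continuous_apply i) continuous_const

lemma isOpen_stripGT (i : Fin n) (r : ℝ) : IsOpen {x : Fin n → ℝ | r < x i} :=
  isOpen_lt continuous_const (continuous_apply i)

lemma nu_stripLT_le (hmeas : ∀ x : ℝ, Measurable fun a => F a (Set.Iic x))
    (i : Fin n) (q : ℚ) :
    nu F hCM h hmeas {x : Fin n → ℝ | x i < (q : ℝ)} ≤ ∫⁻ a, F a (Set.Iic (q : ℝ)) ∂h := by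
  have hb : ∀ k, Qk F hCM h k {x : Fin n → ℝ | x i < (q : ℝ)} ≤ Gk F h k (Set.Iic (q : ℝ)) := by
    intro k
    have : {x : Fin n → ℝ | x i < (q : ℝ)} = (fun x : Fin n → ℝ => x i) ⁻¹' Set.Iio (q : ℝ) := rfl
    rw [this, Qk_eval F hCM h k i measurableSet_Iio]
    exact measure_mono Set.Iio_subset_Iic_self
  have := nu_le_of_open F hCM h hmeas (isOpen_stripLT i (q : ℝ)) hb
  rwa [LL_Gk_Iic F h hmeas q] at this

lemma nu_stripGT_le (hmeas : ∀ x : ℝ, Measurable fun a => F a (Set.Iic x))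
    (i : Fin n) (q : ℚ) :
    nu F hCM h hmeas {x : Fin n → ℝ | (q : ℝ) < x i} ≤
      1 - ∫⁻ a, F a (Set.Iic (q : ℝ)) ∂h := by
  have hb : ∀ k, Qk F hCM h k {x : Fin n → ℝ | (q : ℝ) < x i} ≤
      1 - Gk F h k (Set.Iic (q : ℝ)) := by
    intro k
    have : {x : Fin n → ℝ | (q : ℝ) < x i} = (fun x : Fin n → ℝ => x i) ⁻¹' Set.Ioi (q : ℝ) := rfl
    rw [this, Qk_eval F hCM h k i measurableSet_Ioi, Gk_Ioi F h hmeas]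
  have := nu_le_of_open F hCM h hmeas (isOpen_stripGT i (q : ℝ)) hb
  rwa [LL_one_sub (fun k => Gk_le_one F h hmeas k _), LL_Gk_Iic F h hmeas q] at this

lemma nu_sum_ne (hmeas : ∀ x : ℝ, Measurable fun a => F a (Set.Iic x)) :
    nu F hCM h hmeas {x : Fin n → ℝ | ∑ i, x i ≠ (n : ℝ) * μ} = 0 := by
  have hcont : Continuous (fun x : Fin n → ℝ => ∑ i, x i) :=
    continuous_finset_sum _ fun i _ => continuous_apply i
  have hlt : nu F hCM h hmeas {x : Fin n → ℝ | ∑ i, x i < (n : ℝ) * μ} = 0 := by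
    refine le_antisymm ?_ (zero_le)
    have hb : ∀ k, Qk F hCM h k {x : Fin n → ℝ | ∑ i, x i < (n : ℝ) * μ} ≤ (fun _ => 0) k := by
      intro k
      refine le_of_eq (measure_mono_null ?_ (Qk_null F hCM h k))
      intro x hx
      exact ne_of_lt hx
    have := nu_le_of_open F hCM h hmeas (isOpen_lt hcont continuous_const) hb
    rwa [LL_const] at this
  have hgt : nu F hCM h hmeas {x : Fin n → ℝ | (n : ℝ) * μ < ∑ i, x i} = 0 := by
    refine le_antisymm ?_ (zero_le)
    have hb : ∀ k, Qk F hCM h k {x : Fin n → ℝ | (n : ℝ) * μ < ∑ i, x i} ≤ (fun _ => 0) k := by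
      intro k
      refine le_of_eq (measure_mono_null ?_ (Qk_null F hCM h k))
      intro x hx
      exact (ne_of_lt hx).symm
    have := nu_le_of_open F hCM h hmeas (isOpen_lt continuous_const hcont) hb
    rwa [LL_const] at this
  have hsub : {x : Fin n → ℝ | ∑ i, x i ≠ (n : ℝ) * μ} ⊆
      {x : Fin n → ℝ | ∑ i, x i < (n : ℝ) * μ} ∪ {x : Fin n → ℝ | (n : ℝ) * μ < ∑ i, x i} := by
    intro x hx
    rcases lt_or_gt_of_ne hx with h' | h'
    · exact Or.inl h'
    · exact Or.inr h'
  exact measure_mono_null hsub (measure_union_null hlt hgt)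

/-! ### Layer 6: total mass lower bound -/

lemma nu_univ_ge (hmeas : ∀ x : ℝ, Measurable fun a => F a (Set.Iic x)) (u w : ℚ) :
    1 ≤ nu F hCM h hmeas Set.univ +
      (n : ℝ≥0∞) * ((∫⁻ a, F a (Set.Iic (u : ℝ)) ∂h) +
        (1 - ∫⁻ a, F a (Set.Iic (w : ℝ)) ∂h)) := by
  classical
  set v : ℚ := w + 1 with hv
  set b0 : Bx n := (fun _ => u, fun _ => v) with hb0
  set Kc : Compacts (Fin n → ℝ) :=
    ⟨Set.univ.pi fun _ => Set.Icc (u : ℝ) (v : ℝ),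
      isCompact_univ_pi fun _ => isCompact_Icc⟩ with hKc
  have hbox_sub : boxI b0 ⊆ (Kc : Set (Fin n → ℝ)) := by
    intro x hx
    simp only [boxI, Set.mem_pi, Set.mem_univ, forall_true_left, Set.mem_Ioo] at hx
    intro i _
    exact ⟨(hx i).1.le, (hx i).2.le⟩
  set Iu := ∫⁻ a, F a (Set.Iic (u : ℝ)) ∂h with hIu
  set Iw := ∫⁻ a, F a (Set.Iic (w : ℝ)) ∂h with hIw
  -- pointwise tail bound
  have tail : ∀ k s, (Kc : Set (Fin n → ℝ)) ⊆ US s →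
      (1 : ℝ≥0∞) ≤ Qk F hCM h k (US s) +
        (n : ℝ≥0∞) * (Gk F h k (Set.Iic (u : ℝ)) + (1 - Gk F h k (Set.Iic (w : ℝ)))) := by
    intro k s hs
    have step1 : (1 : ℝ≥0∞) ≤ Qk F hCM h k (boxI b0) + Qk F hCM h k (boxI b0)ᶜ := by
      rw [← Qk_univ F hCM h hmeas k, ← Set.union_compl_self (boxI b0)]
      exact measure_union_le _ _
    have hcover : (boxI b0)ᶜ ⊆ ⋃ i : Fin n,
        ((fun x : Fin n → ℝ => x i) ⁻¹' Set.Iic (u : ℝ) ∪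
          (fun x : Fin n → ℝ => x i) ⁻¹' Set.Ici (v : ℝ)) := by
      intro x hx
      simp only [boxI, Set.mem_compl_iff, Set.mem_pi, Set.mem_univ, forall_true_left,
        Set.mem_Ioo, not_forall] at hx
      obtain ⟨i, hi⟩ := hx
      refine Set.mem_iUnion.2 ⟨i, ?_⟩
      rcases not_and_or.1 hi with h' | h'
      · exact Or.inl (not_lt.1 h')
      · exact Or.inr (not_lt.1 h')
    have step2 : Qk F hCM h k (boxI b0)ᶜ ≤
        (n : ℝ≥0∞) * (Gk F h k (Set.Iic (u : ℝ)) + Gk F h k (Set.Ici (v : ℝ))) := by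
      refine le_trans (measure_mono hcover) ?_
      refine le_trans (measure_iUnion_le _) ?_
      have hterm : ∀ i : Fin n, Qk F hCM h k
          ((fun x : Fin n → ℝ => x i) ⁻¹' Set.Iic (u : ℝ) ∪
            (fun x : Fin n → ℝ => x i) ⁻¹' Set.Ici (v : ℝ)) ≤
          Gk F h k (Set.Iic (u : ℝ)) + Gk F h k (Set.Ici (v : ℝ)) := by
        intro i
        refine le_trans (measure_union_le _ _) ?_
        rw [Qk_eval F hCM h k i measurableSet_Iic, Qk_eval F hCM h k i measurableSet_Ici]
      refine le_trans (ENNReal.tsum_le_tsum hterm) ?_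
      rw [tsum_fintype, Finset.sum_const, Finset.card_univ, Fintype.card_fin, nsmul_eq_mul]
    have step3 : Gk F h k (Set.Ici (v : ℝ)) ≤ 1 - Gk F h k (Set.Iic (w : ℝ)) := by
      have hwv : (w : ℝ) < (v : ℝ) := by
        rw [hv]; push_cast; linarith
      have : Set.Ici (v : ℝ) ⊆ Set.Ioi (w : ℝ) := fun y hy => lt_of_lt_of_le hwv hy
      refine le_trans (measure_mono this) ?_
      rw [Gk_Ioi F h hmeas]
    have hbox_le : Qk F hCM h k (boxI b0) ≤ Qk F hCM h k (US s) :=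
      measure_mono (hbox_sub.trans hs)
    calc (1 : ℝ≥0∞) ≤ Qk F hCM h k (boxI b0) + Qk F hCM h k (boxI b0)ᶜ := step1
    _ ≤ Qk F hCM h k (US s) +
        (n : ℝ≥0∞) * (Gk F h k (Set.Iic (u : ℝ)) + (1 - Gk F h k (Set.Iic (w : ℝ)))) := by
        refine add_le_add hbox_le (le_trans step2 ?_)
        exact mul_le_mul_right (add_le_add le_rfl step3) _
  -- the `LL`-limit of the tail term
  have LLtail : LL (fun k => (n : ℝ≥0∞) *
      (Gk F h k (Set.Iic (u : ℝ)) + (1 - Gk F h k (Set.Iic (w : ℝ))))) =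
      (n : ℝ≥0∞) * (Iu + (1 - Iw)) := by
    have t1 : Filter.Tendsto (fun k => Gk F h k (Set.Iic (u : ℝ))) UF (𝓝 Iu) := by
      have := tendsto_LL (fun k => Gk F h k (Set.Iic (u : ℝ)))
      rwa [LL_Gk_Iic F h hmeas u] at this
    have t2 : Filter.Tendsto (fun k => 1 - Gk F h k (Set.Iic (w : ℝ))) UF (𝓝 (1 - Iw)) := by
      have := tendsto_LL (fun k => 1 - Gk F h k (Set.Iic (w : ℝ)))
      rwa [LL_one_sub (fun k => Gk_le_one F h hmeas k _), LL_Gk_Iic F h hmeas w] at this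
    have t3 := t1.add t2
    have t4 := ENNReal.Tendsto.const_mul t3 (Or.inr (ENNReal.natCast_ne_top n))
    exact tendsto_nhds_unique (tendsto_LL _) t4
  have key : ∀ s : {s : Finset (Bx n) // (Kc : Set (Fin n → ℝ)) ⊆ US s},
      1 ≤ LL (fun k => Qk F hCM h k (US s.1)) + (n : ℝ≥0∞) * (Iu + (1 - Iw)) := by
    rintro ⟨s, hs⟩
    calc (1 : ℝ≥0∞) = LL (fun _ => 1) := (LL_const 1).symm
    _ ≤ LL (fun k => Qk F hCM h k (US s) + (n : ℝ≥0∞) *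
        (Gk F h k (Set.Iic (u : ℝ)) + (1 - Gk F h k (Set.Iic (w : ℝ))))) :=
        LL_mono fun k => tail k s hs
    _ = LL (fun k => Qk F hCM h k (US s)) + (n : ℝ≥0∞) * (Iu + (1 - Iw)) := by
        rw [LL_add, LLtail]
  have hlam : 1 ≤ lamE F hCM h Kc + (n : ℝ≥0∞) * (Iu + (1 - Iw)) := by
    rw [lamE, ENNReal.iInf_add]
    exact le_iInf key
  refine le_trans hlam (add_le_add ?_ le_rfl)
  rw [nu_open F hCM h hmeas isOpen_univ]
  exact le_iSup₂ (f := fun (K : Compacts (Fin n → ℝ)) (_ : (K : Set (Fin n → ℝ)) ⊆ Set.univ) =>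
    lamE F hCM h K) Kc (Set.subset_univ _)

end MixCM


theorem mixture_of_cm_is_cm
    (n : ℕ) (hn : 1 ≤ n) (μ : ℝ)
    (A : Type*) [MeasurableSpace A] (h : Measure A) [IsProbabilityMeasure h]
    (F : A → Measure ℝ) [∀ a, IsProbabilityMeasure (F a)]
    (hCM : ∀ a : A, ∃ (Ω : Type) (_ : MeasurableSpace Ω) (P : Measure Ω)
      (_ : IsProbabilityMeasure P) (X : Fin n → Ω → ℝ),
      (∀ i, Measurable (X i)) ∧ (∀ i, P.map (X i) = F a) ∧
      (∀ᵐ ω ∂P, ∑ i, X i ω = n * μ))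
    (hmeas : ∀ x : ℝ, Measurable fun a => F a (Set.Iic x))
    (G : Measure ℝ) [IsProbabilityMeasure G]
    (hG : ∀ x : ℝ, G (Set.Iic x) = ∫⁻ a, F a (Set.Iic x) ∂h) :
    ∃ (Ω : Type) (_ : MeasurableSpace Ω) (P : Measure Ω) (_ : IsProbabilityMeasure P)
      (X : Fin n → Ω → ℝ), (∀ i, Measurable (X i)) ∧ (∀ i, P.map (X i) = G) ∧
      (∀ᵐ ω ∂P, ∑ i, X i ω = n * μ) := by
  classical
  haveI : Nonempty A := by
    rcases isEmpty_or_nonempty A with hA | hA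
    · exfalso
      have h1 : h Set.univ = 1 := measure_univ
      rw [Set.univ_eq_empty_iff.2 hA, measure_empty] at h1
      exact zero_ne_one h1
    · exact hA
  set ν := MixCM.nu F hCM h hmeas with hνdef
  have hν_le : ν Set.univ ≤ 1 := MixCM.nu_univ_le F hCM h hmeas
  have hν_ge : 1 ≤ ν Set.univ := by
    refine ENNReal.le_of_forall_pos_le_add fun ε hε hlt => ?_
    set δ : ℝ≥0∞ := (ε : ℝ≥0∞) / ((2 * n + 2 : ℕ) : ℝ≥0∞) with hδ
    have hδ0 : δ ≠ 0 := by
      rw [hδ]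
      exact (ENNReal.div_ne_zero).2 ⟨ENNReal.coe_ne_zero.2 hε.ne', ENNReal.natCast_ne_top _⟩
    have h2 : Filter.Tendsto (fun m : ℕ => G (Set.Iic (m : ℝ))) Filter.atTop (𝓝 1) := by
      have h2' := (tendsto_measure_Iic_atTop G).comp (tendsto_natCast_atTop_atTop (R := ℝ))
      rw [measure_univ] at h2'
      exact h2'
    have h1t : Filter.Tendsto (fun m : ℕ => G (Set.Iic (-(m : ℝ)))) Filter.atTop (𝓝 0) := by
      have hse : (⋂ m : ℕ, Set.Iic (-(m : ℝ))) = ∅ := by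
        ext y
        simp only [Set.mem_iInter, Set.mem_Iic, Set.mem_empty_iff_false, iff_false, not_forall]
        obtain ⟨m, hm⟩ := exists_nat_gt (-y)
        exact ⟨m, not_le.2 (by linarith)⟩
      have ht := tendsto_measure_iInter_atTop (μ := G) (s := fun m : ℕ => Set.Iic (-(m : ℝ)))
        (fun m => measurableSet_Iic.nullMeasurableSet)
        (fun m m' hmm' => Set.Iic_subset_Iic.2 (neg_le_neg (by exact_mod_cast hmm')))
        ⟨0, measure_ne_top G _⟩
      rw [hse] at ht
      simpa [Function.comp_def] using ht
    have hw : ∃ m : ℕ, 1 - G (Set.Iic (m : ℝ)) ≤ δ := by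
      have hlt1 : (1 : ℝ≥0∞) - δ < 1 := ENNReal.sub_lt_self ENNReal.one_ne_top one_ne_zero hδ0
      obtain ⟨m, hm⟩ := (h2.eventually_mem (isOpen_Ioi.mem_nhds hlt1)).exists
      refine ⟨m, ?_⟩
      rw [tsub_le_iff_right]
      by_cases hδ1 : δ ≤ 1
      · calc (1 : ℝ≥0∞) = (1 - δ) + δ := (tsub_add_cancel_of_le hδ1).symm
        _ ≤ G (Set.Iic (m : ℝ)) + δ := add_le_add (le_of_lt hm) le_rfl
        _ = δ + G (Set.Iic (m : ℝ)) := add_comm _ _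
      · calc (1 : ℝ≥0∞) ≤ δ := le_of_not_ge hδ1
        _ ≤ δ + G (Set.Iic (m : ℝ)) := le_self_add
    obtain ⟨mw, hmw⟩ := hw
    have hu : ∃ m : ℕ, G (Set.Iic (-(m : ℝ))) ≤ δ := by
      obtain ⟨m, hm⟩ := (h1t.eventually_mem (isOpen_Iio.mem_nhds (pos_iff_ne_zero.2 hδ0))).exists
      exact ⟨m, le_of_lt hm⟩
    obtain ⟨mu, hmu⟩ := hu
    have hkey := MixCM.nu_univ_ge F hCM h hmeas (-(mu : ℚ)) (mw : ℚ)
    have hcastu : (((-(mu : ℚ)) : ℚ) : ℝ) = -(mu : ℝ) := by push_cast; ring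
    have hcastw : (((mw : ℚ) : ℚ) : ℝ) = (mw : ℝ) := by push_cast; ring
    rw [hcastu, hcastw, ← hG (-(mu : ℝ)), ← hG ((mw : ℝ))] at hkey
    have htail : (n : ℝ≥0∞) * (G (Set.Iic (-(mu : ℝ))) + (1 - G (Set.Iic (mw : ℝ)))) ≤
        (ε : ℝ≥0∞) := by
      calc (n : ℝ≥0∞) * (G (Set.Iic (-(mu : ℝ))) + (1 - G (Set.Iic (mw : ℝ))))
          ≤ (n : ℝ≥0∞) * (δ + δ) := mul_le_mul_right (add_le_add hmu hmw) _
      _ = ((2 * n : ℕ) : ℝ≥0∞) * δ := by push_cast; ring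
      _ ≤ ((2 * n + 2 : ℕ) : ℝ≥0∞) * δ := mul_le_mul_left (Nat.cast_le.2 (by omega)) _
      _ = (ε : ℝ≥0∞) := by
          rw [hδ, ENNReal.mul_div_cancel (by exact_mod_cast (by omega : (2 * n + 2 : ℕ) ≠ 0))
            (ENNReal.natCast_ne_top _)]
    calc (1 : ℝ≥0∞) ≤ ν Set.univ +
        (n : ℝ≥0∞) * (G (Set.Iic (-(mu : ℝ))) + (1 - G (Set.Iic (mw : ℝ)))) := hkey
    _ ≤ ν Set.univ + ε := add_le_add le_rfl htail
  have hν_univ : ν Set.univ = 1 := le_antisymm hν_le hν_ge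
  haveI hνprob : IsProbabilityMeasure ν := ⟨hν_univ⟩
  -- marginal values at rational points
  have hmargQ : ∀ (i : Fin n) (q : ℚ),
      ν ((fun x : Fin n → ℝ => x i) ⁻¹' Set.Iic (q : ℝ)) = G (Set.Iic (q : ℝ)) := by
    intro i q
    have hmeasp : MeasurableSet ((fun x : Fin n → ℝ => x i) ⁻¹' Set.Iic (q : ℝ)) :=
      measurable_pi_apply i measurableSet_Iic
    have hcompl : ((fun x : Fin n → ℝ => x i) ⁻¹' Set.Iic (q : ℝ))ᶜ =
        {x : Fin n → ℝ | (q : ℝ) < x i} := by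
      ext x; simp [not_le]
    have hadd : ν ((fun x : Fin n → ℝ => x i) ⁻¹' Set.Iic (q : ℝ)) +
        ν {x : Fin n → ℝ | (q : ℝ) < x i} = 1 := by
      rw [← hcompl, measure_add_measure_compl hmeasp, hν_univ]
    have hgt : ν {x : Fin n → ℝ | (q : ℝ) < x i} ≤ 1 - G (Set.Iic (q : ℝ)) := by
      have hh := MixCM.nu_stripGT_le F hCM h hmeas i q
      rwa [← hG] at hh
    have hlow : G (Set.Iic (q : ℝ)) ≤ ν ((fun x : Fin n → ℝ => x i) ⁻¹' Set.Iic (q : ℝ)) := by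
      have hb : ν ((fun x : Fin n → ℝ => x i) ⁻¹' Set.Iic (q : ℝ)) =
          1 - ν {x : Fin n → ℝ | (q : ℝ) < x i} :=
        ENNReal.eq_sub_of_add_eq
          ((lt_of_le_of_lt (prob_le_one) ENNReal.one_lt_top).ne) hadd
      rw [hb]
      calc G (Set.Iic (q : ℝ)) = 1 - (1 - G (Set.Iic (q : ℝ))) :=
            (ENNReal.sub_sub_cancel ENNReal.one_ne_top prob_le_one).symm
      _ ≤ 1 - ν {x : Fin n → ℝ | (q : ℝ) < x i} := tsub_le_tsub_left hgt 1
    have hupp : ν ((fun x : Fin n → ℝ => x i) ⁻¹' Set.Iic (q : ℝ)) ≤ G (Set.Iic (q : ℝ)) := by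
      have hb : ∀ m : ℕ, ν ((fun x : Fin n → ℝ => x i) ⁻¹' Set.Iic (q : ℝ)) ≤
          G (Set.Iic (((q + 1 / (m + 1) : ℚ)) : ℝ)) := by
        intro m
        have hqlt : (q : ℝ) < (((q + 1 / (m + 1) : ℚ)) : ℝ) := by
          push_cast
          have : (0 : ℝ) < 1 / ((m : ℝ) + 1) := by positivity
          linarith
        have hsub : ((fun x : Fin n → ℝ => x i) ⁻¹' Set.Iic (q : ℝ)) ⊆
            {x : Fin n → ℝ | x i < (((q + 1 / (m + 1) : ℚ)) : ℝ)} := by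
          intro x hx
          exact lt_of_le_of_lt hx hqlt
        refine le_trans (measure_mono hsub) ?_
        have hh := MixCM.nu_stripLT_le F hCM h hmeas i (q + 1 / (m + 1))
        rwa [← hG] at hh
      have hmono : Antitone (fun m : ℕ => Set.Iic ((((q + 1 / (m + 1) : ℚ)) : ℝ))) := by
        intro m m' hmm'
        apply Set.Iic_subset_Iic.2
        have hq' : (q + 1 / (m' + 1) : ℚ) ≤ (q + 1 / (m + 1) : ℚ) := by
          have h1 : (1 : ℚ) / (m' + 1) ≤ 1 / (m + 1) := by
            apply one_div_le_one_div_of_le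
            · positivity
            · exact_mod_cast Nat.succ_le_succ hmm'
          linarith
        exact_mod_cast hq'
      have hint : (⋂ m : ℕ, Set.Iic ((((q + 1 / (m + 1) : ℚ)) : ℝ))) = Set.Iic (q : ℝ) := by
        ext y
        simp only [Set.mem_iInter, Set.mem_Iic]
        constructor
        · intro hy
          by_contra hy'
          push_neg at hy'
          obtain ⟨m, hm⟩ := exists_nat_one_div_lt (sub_pos.2 hy')
          have h1 := hy m
          have hc : (((q + 1 / (m + 1) : ℚ)) : ℝ) = (q : ℝ) + 1 / ((m : ℝ) + 1) := by
            push_cast; ring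
          rw [hc] at h1
          linarith
        · intro hy m
          have hc : (((q + 1 / (m + 1) : ℚ)) : ℝ) = (q : ℝ) + 1 / ((m : ℝ) + 1) := by
            push_cast; ring
          rw [hc]
          have : (0 : ℝ) < 1 / ((m : ℝ) + 1) := by positivity
          linarith
      have hlim := tendsto_measure_iInter_atTop (μ := G)
        (s := fun m : ℕ => Set.Iic ((((q + 1 / (m + 1) : ℚ)) : ℝ)))
        (fun m => measurableSet_Iic.nullMeasurableSet) hmono ⟨0, measure_ne_top G _⟩
      rw [hint] at hlim
      exact ge_of_tendsto' hlim hb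
    exact le_antisymm hupp hlow
  -- marginal equality
  have hmarg : ∀ i : Fin n, ν.map (fun x : Fin n → ℝ => x i) = G := by
    intro i
    haveI : IsProbabilityMeasure (ν.map (fun x : Fin n → ℝ => x i)) :=
      Measure.isProbabilityMeasure_map (measurable_pi_apply i).aemeasurable
    refine MeasureTheory.Measure.ext_of_Iic (ν.map (fun x : Fin n → ℝ => x i)) G fun x => ?_
    rw [Measure.map_apply (measurable_pi_apply i) measurableSet_Iic]
    have hex : ∀ m : ℕ, ∃ p : ℚ, x < (p : ℝ) ∧ (p : ℝ) < x + 1 / ((m : ℝ) + 1) := by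
      intro m
      have : x < x + 1 / ((m : ℝ) + 1) := by
        have : (0 : ℝ) < 1 / ((m : ℝ) + 1) := by positivity
        linarith
      exact exists_rat_btwn this
    choose r hr1 hr2 using hex
    set r' : ℕ → ℚ := fun m => ((Finset.range (m + 1)).image r).min'
      ((Finset.nonempty_range_add_one).image r) with hr'def
    have hr'le : ∀ m, r' m ≤ r m := fun m =>
      Finset.min'_le _ _ (Finset.mem_image_of_mem r (Finset.self_mem_range_succ m))
    have hr'gt : ∀ m, x < (r' m : ℝ) := by
      intro m
      have hmem' : r' m ∈ (Finset.range (m + 1)).image r :=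
        Finset.min'_mem ((Finset.range (m + 1)).image r) ((Finset.nonempty_range_add_one).image r)
      obtain ⟨j, hj, hje⟩ := Finset.mem_image.1 hmem'
      rw [← hje]
      exact hr1 j
    have hr'anti : Antitone r' := by
      intro m m' hmm'
      exact Finset.min'_subset _ (Finset.image_subset_image (Finset.range_subset_range.2 (by omega)))
    have hiic : (⋂ m : ℕ, Set.Iic ((r' m : ℝ))) = Set.Iic x := by
      ext y
      simp only [Set.mem_iInter, Set.mem_Iic]
      constructor
      · intro hy
        by_contra hy'
        push_neg at hy'
        obtain ⟨m, hm⟩ := exists_nat_one_div_lt (sub_pos.2 hy')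
        have h1 := hy m
        have h2 : (r' m : ℝ) ≤ (r m : ℝ) := by exact_mod_cast hr'le m
        have h3 := hr2 m
        linarith
      · intro hy m
        exact le_trans hy (le_of_lt (hr'gt m))
    have hlim1 := tendsto_measure_iInter_atTop (μ := ν)
      (s := fun m : ℕ => (fun x : Fin n → ℝ => x i) ⁻¹' Set.Iic ((r' m : ℝ)))
      (fun m => (measurable_pi_apply i measurableSet_Iic).nullMeasurableSet)
      (fun m m' hmm' => Set.preimage_mono (Set.Iic_subset_Iic.2 (by exact_mod_cast hr'anti hmm')))
      ⟨0, measure_ne_top ν _⟩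
    have hpre : (⋂ m : ℕ, (fun x : Fin n → ℝ => x i) ⁻¹' Set.Iic ((r' m : ℝ))) =
        (fun x : Fin n → ℝ => x i) ⁻¹' Set.Iic x := by
      rw [← Set.preimage_iInter, hiic]
    rw [hpre] at hlim1
    have hlim2 := tendsto_measure_iInter_atTop (μ := G)
      (s := fun m : ℕ => Set.Iic ((r' m : ℝ)))
      (fun m => measurableSet_Iic.nullMeasurableSet)
      (fun m m' hmm' => Set.Iic_subset_Iic.2 (by exact_mod_cast hr'anti hmm'))
      ⟨0, measure_ne_top G _⟩
    rw [hiic] at hlim2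
    have hlim1' : Filter.Tendsto (fun m : ℕ => G (Set.Iic ((r' m : ℝ)))) Filter.atTop
        (𝓝 (ν ((fun x : Fin n → ℝ => x i) ⁻¹' Set.Iic x))) := by
      have heq : (fun m : ℕ => ν ((fun x : Fin n → ℝ => x i) ⁻¹' Set.Iic ((r' m : ℝ)))) =
          (fun m : ℕ => G (Set.Iic ((r' m : ℝ)))) := funext fun m => hmargQ i (r' m)
      have := hlim1
      rw [show (ν ∘ fun m : ℕ => (fun x : Fin n → ℝ => x i) ⁻¹' Set.Iic ((r' m : ℝ))) =
        (fun m : ℕ => ν ((fun x : Fin n → ℝ => x i) ⁻¹' Set.Iic ((r' m : ℝ)))) from rfl,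
        heq] at this
      exact this
    exact tendsto_nhds_unique hlim1' hlim2
  refine ⟨(Fin n → ℝ), inferInstance, ν, hνprob, fun i x => x i,
    fun i => measurable_pi_apply i, hmarg, ?_⟩
  rw [MeasureTheory.ae_iff]
  have hset : {ω : Fin n → ℝ | ¬ ∑ i, ω i = (n : ℝ) * μ} =
      {x : Fin n → ℝ | ∑ i, x i ≠ (n : ℝ) * μ} := rfl
  exact MixCM.nu_sum_ne F hCM h hmeas
end

section
/- If F is an n-completely mixable distribution on ℝ with center μ, then F is a mixture of n-discrete uniform distributions with mean μ: there exists a probability measure h on ℝⁿ concentrated on {a ∈ ℝⁿ : a_1+...+a_n = nμ} such that F(x) = ∫ F_a(x) dh(a) for all x, where F_a is the n-discrete uniform distribution on the coordinates of a. -/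
open MeasureTheory

theorem cm_is_mixture_of_discrete_uniforms
    (n : ℕ) (hn : 1 ≤ n) (F : Measure ℝ) [IsProbabilityMeasure F] (μ : ℝ)
    (hCM : ∃ (Ω : Type) (_ : MeasurableSpace Ω) (P : Measure Ω) (_ : IsProbabilityMeasure P)
      (X : Fin n → Ω → ℝ), (∀ i, Measurable (X i)) ∧ (∀ i, P.map (X i) = F) ∧
      (∀ᵐ ω ∂P, ∑ i, X i ω = n * μ)) :
    ∃ h : Measure (Fin n → ℝ), IsProbabilityMeasure h ∧
      h {a : Fin n → ℝ | ∑ i, a i = n * μ}ᶜ = 0 ∧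
      ∀ x : ℝ, F (Set.Iic x) =
        ∫⁻ a, (((Finset.univ.filter fun i => a i ≤ x).card : ENNReal) / n) ∂h := by
  obtain ⟨Ω, mΩ, P, hP, X, hXm, hXd, hsum⟩ := hCM
  set Y : Ω → (Fin n → ℝ) := fun ω i => X i ω with hY
  have hYm : Measurable Y := measurable_pi_lambda _ hXm
  have hnn : (n : ENNReal) ≠ 0 := by
    exact_mod_cast (by omega : n ≠ 0)
  refine ⟨P.map Y, Measure.isProbabilityMeasure_map hYm.aemeasurable, ?_, ?_⟩
  · have hms : MeasurableSet {a : Fin n → ℝ | ∑ i, a i = n * μ} :=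
      measurableSet_eq_fun (Finset.measurable_sum _ fun i _ => measurable_pi_apply i)
        measurable_const
    rw [Measure.map_apply hYm hms.compl]
    have heq : Y ⁻¹' ({a : Fin n → ℝ | ∑ i, a i = n * μ}ᶜ)
        = {ω | ¬ (∑ i, X i ω = n * μ)} := rfl
    rw [heq]
    exact ae_iff.mp hsum
  · intro x
    have hmeas_i : ∀ i : Fin n, MeasurableSet {a : Fin n → ℝ | a i ≤ x} :=
      fun i => measurableSet_le (measurable_pi_apply i) measurable_const
    have key : ∀ i : Fin n, (P.map Y) {a : Fin n → ℝ | a i ≤ x} = F (Set.Iic x) := by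
      intro i
      rw [Measure.map_apply hYm (hmeas_i i), ← hXd i,
        Measure.map_apply (hXm i) measurableSet_Iic]
      rfl
    have hpt : ∀ a : Fin n → ℝ,
        (((Finset.univ.filter fun i => a i ≤ x).card : ENNReal) / n)
        = ∑ i : Fin n,
            Set.indicator {b : Fin n → ℝ | b i ≤ x} (fun _ => (n : ENNReal)⁻¹) a := by
      intro a
      rw [Finset.card_filter, Nat.cast_sum, div_eq_mul_inv, Finset.sum_mul]
      refine Finset.sum_congr rfl fun i _ => ?_
      by_cases hix : a i ≤ x <;>
        simp [Set.indicator_apply, hix]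
    rw [lintegral_congr hpt,
      lintegral_finset_sum _ (fun i _ =>
        (measurable_const.indicator (hmeas_i i)))]
    have : ∀ i : Fin n, ∫⁻ a, Set.indicator {b : Fin n → ℝ | b i ≤ x}
        (fun _ => (n : ENNReal)⁻¹) a ∂(P.map Y) = (n : ENNReal)⁻¹ * F (Set.Iic x) := by
      intro i
      rw [lintegral_indicator_const (hmeas_i i), key i]
    rw [Finset.sum_congr rfl fun i _ => this i, Finset.sum_const, Finset.card_univ,
      Fintype.card_fin, nsmul_eq_mul, ← mul_assoc,
      ENNReal.mul_inv_cancel hnn (by simp), one_mul]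
end

section
/- Normal distributions N(μ_1,σ_1²),...,N(μ_n,σ_n²) with σ_1+...+σ_n ≥ 2·max_i σ_i are jointly mixable: there exist jointly Gaussian random variables X_i ~ N(μ_i, σ_i²) with X_1+...+X_n = μ_1+...+μ_n almost surely. -/
open MeasureTheory ProbabilityTheory


lemma abs_add_le_of_mul_nonpos {x t M : ℝ} (hx : |x| ≤ M) (ht : |t| ≤ M)
    (hxt : x * t ≤ 0) : |x + t| ≤ M := by
  rw [abs_le] at hx ht ⊢
  rcases mul_nonpos_iff.mp hxt with ⟨hx0, ht0⟩ | ⟨hx0, ht0⟩ <;>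
    constructor <;> linarith

lemma exists_signs {ι : Type*} [DecidableEq ι] (l : Finset ι) (f : ι → ℝ) (M : ℝ) (hM : 0 ≤ M)
    (h : ∀ i ∈ l, |f i| ≤ M) :
    ∃ ε : ι → ℝ, (∀ i, ε i = 1 ∨ ε i = -1) ∧ |∑ i ∈ l, ε i * f i| ≤ M := by
  classical
  revert h
  refine Finset.induction_on l ?_ ?_
  · exact fun _ => ⟨fun _ => 1, fun _ => Or.inl rfl, by simpa using hM⟩
  · intro a s ha ih h
    obtain ⟨ε, hε, hsum⟩ := ih (fun i hi => h i (Finset.mem_insert_of_mem hi))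
    set t := ∑ i ∈ s, ε i * f i with ht
    set v : ℝ := if 0 ≤ f a * t then -1 else 1 with hv
    refine ⟨Function.update ε a v, ?_, ?_⟩
    · intro i
      by_cases hi : i = a
      · rw [hi, Function.update_self]
        by_cases h0 : 0 ≤ f a * t <;> simp [hv, h0]
      · rw [Function.update_of_ne hi]; exact hε i
    · rw [Finset.sum_insert ha, Function.update_self]
      have hrest : ∑ i ∈ s, Function.update ε a v i * f i = t := by
        rw [ht]
        refine Finset.sum_congr rfl fun i hi => ?_
        have hia : i ≠ a := fun hia => ha (hia ▸ hi)
        rw [Function.update_of_ne hia]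
      rw [hrest]
      have hfa : |f a| ≤ M := h a (Finset.mem_insert_self a s)
      have hva : |v * f a| ≤ M := by
        have : |v| = 1 := by by_cases h0 : 0 ≤ f a * t <;> simp [hv, h0]
        rw [abs_mul, this, one_mul]; exact hfa
      have hvt : v * f a * t ≤ 0 := by
        by_cases h0 : 0 ≤ f a * t
        · simp only [hv, if_pos h0]; nlinarith
        · simp only [hv, if_neg h0]; nlinarith [lt_of_not_ge h0]
      exact abs_add_le_of_mul_nonpos hva hsum hvt

set_option maxHeartbeats 1000000 in
lemma exists_planar (n : ℕ) (σ : Fin n → NNReal)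
    (hσ : 2 * Finset.univ.sup σ ≤ ∑ i, σ i) :
    ∃ c d : Fin n → ℝ, (∀ i, c i ^ 2 + d i ^ 2 = (σ i : ℝ) ^ 2) ∧
      (∑ i, c i = 0) ∧ (∑ i, d i = 0) := by
  classical
  by_cases hn : Finset.univ.sup σ = 0
  · refine ⟨0, 0, fun i => ?_, by simp, by simp⟩
    have : σ i = 0 := le_antisymm (hn ▸ Finset.le_sup (Finset.mem_univ i)) zero_le
    simp [this]
  · have hne : (Finset.univ : Finset (Fin n)).Nonempty := by
      rcases (Finset.univ : Finset (Fin n)).eq_empty_or_nonempty with h | h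
      · exfalso; apply hn; rw [h, Finset.sup_empty]; rfl
      · exact h
    obtain ⟨j, -, hj⟩ := Finset.exists_mem_eq_sup Finset.univ hne σ
    obtain ⟨L1, hL1def⟩ : ∃ L1 : ℝ, L1 = (σ j : ℝ) := ⟨_, rfl⟩
    have hL1 : 0 < L1 := by
      have hne0 : σ j ≠ 0 := fun h => hn (by rw [hj]; exact h)
      have h2 : 0 < σ j := pos_iff_ne_zero.mpr hne0
      rw [hL1def]; exact_mod_cast h2
    obtain ⟨s, hs⟩ : ∃ s : Finset (Fin n), s = Finset.univ.erase j := ⟨_, rfl⟩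
    have hbound : ∀ i ∈ s, |(σ i : ℝ)| ≤ L1 := by
      intro i _
      rw [abs_of_nonneg (σ i).coe_nonneg, hL1def]
      exact_mod_cast hj ▸ Finset.le_sup (f := σ) (Finset.mem_univ i)
    obtain ⟨ε, hε, hsum⟩ := exists_signs s (fun i => (σ i : ℝ)) L1 hL1.le hbound
    obtain ⟨a, hadef⟩ : ∃ a : ℝ, a = ∑ i ∈ s, (1 + ε i) / 2 * (σ i : ℝ) := ⟨_, rfl⟩
    obtain ⟨b, hbdef⟩ : ∃ b : ℝ, b = ∑ i ∈ s, (1 - ε i) / 2 * (σ i : ℝ) := ⟨_, rfl⟩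
    have hterm_a : ∀ i ∈ s, 0 ≤ (1 + ε i) / 2 * (σ i : ℝ) := by
      intro i _
      rcases hε i with h | h <;> rw [h] <;> positivity
    have hterm_b : ∀ i ∈ s, 0 ≤ (1 - ε i) / 2 * (σ i : ℝ) := by
      intro i _
      rcases hε i with h | h <;> rw [h] <;> simp <;> positivity
    have ha0 : 0 ≤ a := hadef ▸ Finset.sum_nonneg hterm_a
    have hb0 : 0 ≤ b := hbdef ▸ Finset.sum_nonneg hterm_b
    have hab1 : a - b = ∑ i ∈ s, ε i * (σ i : ℝ) := by
      rw [hadef, hbdef, ← Finset.sum_sub_distrib]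
      exact Finset.sum_congr rfl fun i _ => by ring
    have habs : |a - b| ≤ L1 := hab1 ▸ hsum
    have hab2 : a + b = (∑ i, (σ i : ℝ)) - L1 := by
      rw [hadef, hbdef, ← Finset.sum_add_distrib]
      have : ∑ i ∈ s, ((1 + ε i) / 2 * (σ i : ℝ) + (1 - ε i) / 2 * (σ i : ℝ))
          = ∑ i ∈ s, (σ i : ℝ) := Finset.sum_congr rfl fun i _ => by ring
      rw [this, hs, hL1def]
      have := Finset.add_sum_erase Finset.univ (fun i => (σ i : ℝ)) (Finset.mem_univ j)
      linarith [this]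
    have hS : 2 * L1 ≤ ∑ i, (σ i : ℝ) := by
      have h2 : ((2 * Finset.univ.sup σ : NNReal) : ℝ) ≤ ((∑ i, σ i : NNReal) : ℝ) := by
        exact_mod_cast hσ
      rw [hj] at h2
      push_cast at h2
      linarith
    have htri2 : L1 ≤ a + b := by rw [hab2]; linarith
    rw [abs_le] at habs
    obtain ⟨x, hxdef⟩ : ∃ x : ℝ, x = (b ^ 2 - a ^ 2 - L1 ^ 2) / (2 * L1) := ⟨_, rfl⟩
    have h2L1x : 2 * L1 * x = b ^ 2 - a ^ 2 - L1 ^ 2 := by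
      rw [hxdef]; field_simp
    have hx2 : x ^ 2 ≤ a ^ 2 := by
      have key : 0 ≤ ((L1 + a) ^ 2 - b ^ 2) * (b ^ 2 - (a - L1) ^ 2) := by
        have h1 : 0 ≤ (L1 + a) - b := by linarith
        have h2 : 0 ≤ (L1 + a) + b := by linarith
        have h3 : 0 ≤ b - (a - L1) := by linarith
        have h4 : 0 ≤ b + (a - L1) := by linarith
        nlinarith [mul_nonneg (mul_nonneg h1 h2) (mul_nonneg h3 h4)]
      have h4L : (0 : ℝ) < (2 * L1) ^ 2 := by positivity
      have hmul : (2 * L1) ^ 2 * x ^ 2 ≤ (2 * L1) ^ 2 * a ^ 2 := by nlinarith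
      exact le_of_mul_le_mul_left hmul h4L
    obtain ⟨y, hydef⟩ : ∃ y : ℝ, y = Real.sqrt (a ^ 2 - x ^ 2) := ⟨_, rfl⟩
    have hy2 : y ^ 2 = a ^ 2 - x ^ 2 := by rw [hydef]; exact Real.sq_sqrt (by linarith)
    have hxy : x ^ 2 + y ^ 2 = a ^ 2 := by linarith
    have hb2 : (L1 + x) ^ 2 + y ^ 2 = b ^ 2 := by nlinarith
    -- degenerate helpers
    have haxx : a * (x / a) = x := by
      by_cases ha : a = 0
      · have hbL : b = L1 := le_antisymm (by linarith [habs.2]) (by linarith)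
        have hx0 : x = 0 := by rw [hxdef, ha, hbL]; ring
        rw [ha, hx0]; ring
      · rw [mul_comm]; exact div_mul_cancel₀ x ha
    have hayy : a * (y / a) = y := by
      by_cases ha : a = 0
      · have hy0 : y = 0 := by
          have : a ^ 2 - x ^ 2 ≤ 0 := by nlinarith
          have h0 : a ^ 2 - x ^ 2 = 0 := le_antisymm this (by nlinarith)
          rw [hydef, h0, Real.sqrt_zero]
        rw [ha, hy0]; ring
      · rw [mul_comm]; exact div_mul_cancel₀ y ha
    have hbxx : b * ((-L1 - x) / b) = -L1 - x := by
      by_cases hb : b = 0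
      · have haL : a = L1 := le_antisymm (by linarith [habs.1]) (by linarith)
        have hx0 : x = -L1 := by
          rw [hxdef, hb, haL]
          rw [show (0:ℝ) ^ 2 - L1 ^ 2 - L1 ^ 2 = (-L1) * (2 * L1) by ring]
          exact mul_div_cancel_right₀ (-L1) (by positivity)
        rw [hb, hx0]; ring
      · rw [mul_comm]; exact div_mul_cancel₀ _ hb
    have hbyy : b * (-y / b) = -y := by
      by_cases hb : b = 0
      · have hy0 : y = 0 := by
          have h0 : a ^ 2 - x ^ 2 = 0 := by nlinarith
          rw [hydef, h0, Real.sqrt_zero]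
        rw [hb, hy0]; ring
      · rw [mul_comm]; exact div_mul_cancel₀ _ hb
    refine ⟨fun i => if i = j then L1 else
        (σ i : ℝ) * ((1 + ε i) / 2 * (x / a) + (1 - ε i) / 2 * ((-L1 - x) / b)),
      fun i => if i = j then 0 else
        (σ i : ℝ) * ((1 + ε i) / 2 * (y / a) + (1 - ε i) / 2 * (-y / b)), ?_, ?_, ?_⟩
    · intro i
      by_cases hi : i = j
      · subst hi
        beta_reduce
        rw [if_pos rfl, if_pos rfl, hL1def]
        ring
      · beta_reduce
        rw [if_neg hi, if_neg hi]
        have his : i ∈ s := by rw [hs]; exact Finset.mem_erase.mpr ⟨hi, Finset.mem_univ i⟩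
        rcases hε i with h | h
        · rw [h]
          norm_num
          by_cases ha : a = 0
          · have hσi : (σ i : ℝ) = 0 := by
              have hle : (1 + ε i) / 2 * (σ i : ℝ) ≤ a := by
                rw [hadef]; exact Finset.single_le_sum hterm_a his
              rw [h] at hle; norm_num at hle
              exact le_antisymm (by linarith) (σ i).coe_nonneg
            rw [hσi]; ring
          · have h1 : (x / a) ^ 2 + (y / a) ^ 2 = 1 := by
              rw [div_pow, div_pow, ← add_div, hxy, div_self (pow_ne_zero 2 ha)]
            nlinarith [h1]
        · rw [h]
          norm_num
          by_cases hb : b = 0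
          · have hσi : (σ i : ℝ) = 0 := by
              have hle : (1 - ε i) / 2 * (σ i : ℝ) ≤ b := by
                rw [hbdef]; exact Finset.single_le_sum hterm_b his
              rw [h] at hle; norm_num at hle
              exact le_antisymm (by linarith) (σ i).coe_nonneg
            rw [hσi]; ring
          · have h1 : ((-L1 - x) / b) ^ 2 + (-y / b) ^ 2 = 1 := by
              rw [div_pow, div_pow, ← add_div,
                show (-L1 - x) ^ 2 + (-y) ^ 2 = (L1 + x) ^ 2 + y ^ 2 by ring, hb2,
                div_self (pow_ne_zero 2 hb)]
            nlinarith [h1]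
    · rw [← Finset.add_sum_erase Finset.univ _ (Finset.mem_univ j), if_pos rfl, ← hs]
      have : ∑ i ∈ s, (if i = j then L1 else
          (σ i : ℝ) * ((1 + ε i) / 2 * (x / a) + (1 - ε i) / 2 * ((-L1 - x) / b)))
          = ∑ i ∈ s, ((1 + ε i) / 2 * (σ i : ℝ) * (x / a)
            + (1 - ε i) / 2 * (σ i : ℝ) * ((-L1 - x) / b)) := by
        refine Finset.sum_congr rfl fun i hi => ?_
        rw [hs] at hi
        rw [if_neg (Finset.mem_erase.mp hi).1]; ring
      rw [this, Finset.sum_add_distrib, ← Finset.sum_mul, ← Finset.sum_mul,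
        ← hadef, ← hbdef, haxx, hbxx]
      ring
    · rw [← Finset.add_sum_erase Finset.univ _ (Finset.mem_univ j), if_pos rfl, ← hs]
      have : ∑ i ∈ s, (if i = j then 0 else
          (σ i : ℝ) * ((1 + ε i) / 2 * (y / a) + (1 - ε i) / 2 * (-y / b)))
          = ∑ i ∈ s, ((1 + ε i) / 2 * (σ i : ℝ) * (y / a)
            + (1 - ε i) / 2 * (σ i : ℝ) * (-y / b)) := by
        refine Finset.sum_congr rfl fun i hi => ?_
        rw [hs] at hi
        rw [if_neg (Finset.mem_erase.mp hi).1]; ring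
      rw [this, Finset.sum_add_distrib, ← Finset.sum_mul, ← Finset.sum_mul,
        ← hadef, ← hbdef, hayy, hbyy]
      ring


lemma withDensity_map_equiv {α β : Type*} [MeasurableSpace α] [MeasurableSpace β]
    (μ : Measure α) (e : α ≃ᵐ β) {f : α → ENNReal} (hf : Measurable f) :
    (μ.withDensity f).map e = (μ.map e).withDensity (f ∘ e.symm) := by
  ext s hs
  rw [Measure.map_apply e.measurable hs, withDensity_apply _ (e.measurable hs),
    withDensity_apply _ hs,
    MeasureTheory.setLIntegral_map hs (hf.comp e.symm.measurable) e.measurable]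
  refine setLIntegral_congr_fun (e.measurable hs) (fun x _ => ?_)
  simp

lemma gaussian_prod_eq_withDensity :
    (gaussianReal 0 1).prod (gaussianReal 0 1) =
      (volume : Measure (ℝ × ℝ)).withDensity
        (fun p => gaussianPDF 0 1 p.1 * gaussianPDF 0 1 p.2) := by
  refine Measure.prod_eq fun s t hs ht => ?_
  rw [withDensity_apply _ (hs.prod ht), MeasureTheory.Measure.volume_eq_prod,
    ← Measure.prod_restrict,
    MeasureTheory.lintegral_prod_mul
      (measurable_gaussianPDF 0 1).aemeasurable
      (measurable_gaussianPDF 0 1).aemeasurable,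
    gaussianReal_of_var_ne_zero 0 one_ne_zero,
    withDensity_apply _ hs, withDensity_apply _ ht]

noncomputable def rotEquiv (c d : ℝ) (h : c ^ 2 + d ^ 2 = 1) : (ℝ × ℝ) ≃ₗ[ℝ] (ℝ × ℝ) :=
  LinearEquiv.ofLinear
    (LinearMap.prod
      (c • LinearMap.fst ℝ ℝ ℝ + d • LinearMap.snd ℝ ℝ ℝ)
      ((-d) • LinearMap.fst ℝ ℝ ℝ + c • LinearMap.snd ℝ ℝ ℝ))
    (LinearMap.prod
      (c • LinearMap.fst ℝ ℝ ℝ + (-d) • LinearMap.snd ℝ ℝ ℝ)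
      (d • LinearMap.fst ℝ ℝ ℝ + c • LinearMap.snd ℝ ℝ ℝ))
    (by ext <;> simp <;> nlinarith [h])
    (by ext <;> simp <;> nlinarith [h])

lemma rotEquiv_apply (c d : ℝ) (h : c ^ 2 + d ^ 2 = 1) (p : ℝ × ℝ) :
    rotEquiv c d h p = (c * p.1 + d * p.2, -d * p.1 + c * p.2) := by
  simp [rotEquiv, smul_eq_mul]

lemma rotEquiv_symm_apply (c d : ℝ) (h : c ^ 2 + d ^ 2 = 1) (p : ℝ × ℝ) :
    (rotEquiv c d h).symm p = (c * p.1 - d * p.2, d * p.1 + c * p.2) := by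
  simp [rotEquiv, smul_eq_mul]
  ring_nf

lemma rotEquiv_det (c d : ℝ) (h : c ^ 2 + d ^ 2 = 1) :
    LinearMap.det ((rotEquiv c d h : (ℝ × ℝ) →ₗ[ℝ] (ℝ × ℝ))) = 1 := by
  let B := Module.Basis.finTwoProd ℝ
  rw [← LinearMap.det_toMatrix B, Matrix.det_fin_two]
  simp [LinearMap.toMatrix_apply, rotEquiv, B, Module.Basis.finTwoProd, smul_eq_mul]
  nlinarith [h]

lemma gpdf_one (z : ℝ) :
    gaussianPDFReal 0 1 z = (Real.sqrt (2 * Real.pi))⁻¹ * Real.exp (-(z ^ 2) / 2) := by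
  simp [gaussianPDFReal]

lemma gpdf_prod_eq {u v u' v' : ℝ} (huv : u ^ 2 + v ^ 2 = u' ^ 2 + v' ^ 2) :
    gaussianPDF 0 1 u * gaussianPDF 0 1 v = gaussianPDF 0 1 u' * gaussianPDF 0 1 v' := by
  simp only [gaussianPDF]
  rw [← ENNReal.ofReal_mul (gaussianPDFReal_nonneg _ _ _),
    ← ENNReal.ofReal_mul (gaussianPDFReal_nonneg _ _ _)]
  congr 1
  rw [gpdf_one, gpdf_one, gpdf_one, gpdf_one, mul_mul_mul_comm, ← Real.exp_add,
    mul_mul_mul_comm, ← Real.exp_add]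
  congr 2
  linarith

instance : Measure.IsAddHaarMeasure (volume : Measure (ℝ × ℝ)) := by
  rw [MeasureTheory.Measure.volume_eq_prod]; infer_instance

lemma map_rot (c d : ℝ) (h : c ^ 2 + d ^ 2 = 1) :
    ((gaussianReal 0 1).prod (gaussianReal 0 1)).map
      (fun p : ℝ × ℝ => c * p.1 + d * p.2) = gaussianReal 0 1 := by
  have hfin : FiniteDimensional ℝ (ℝ × ℝ) := by infer_instance
  set e : (ℝ × ℝ) ≃ᵐ (ℝ × ℝ) :=
    (rotEquiv c d h).toContinuousLinearEquiv.toHomeomorph.toMeasurableEquiv with he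
  have hfun : ⇑e = ⇑((rotEquiv c d h : (ℝ × ℝ) →ₗ[ℝ] (ℝ × ℝ))) := rfl
  have hsymmfun : ⇑e.symm = ⇑(rotEquiv c d h).symm := rfl
  have hvol : (volume : Measure (ℝ × ℝ)).map e = volume := by
    have hd : LinearMap.det ((rotEquiv c d h : (ℝ × ℝ) →ₗ[ℝ] (ℝ × ℝ))) ≠ 0 := by
      rw [rotEquiv_det]; exact one_ne_zero
    have hmap := Measure.map_linearMap_addHaar_eq_smul_addHaar
      (volume : Measure (ℝ × ℝ)) hd
    rw [rotEquiv_det] at hmap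
    rw [hfun, hmap]
    norm_num
  have hdens : (fun p : ℝ × ℝ => gaussianPDF 0 1 p.1 * gaussianPDF 0 1 p.2) ∘ e.symm
      = fun p : ℝ × ℝ => gaussianPDF 0 1 p.1 * gaussianPDF 0 1 p.2 := by
    funext p
    simp only [Function.comp_apply, hsymmfun, rotEquiv_symm_apply]
    exact gpdf_prod_eq (by nlinarith [h])
  have hP : ((gaussianReal 0 1).prod (gaussianReal 0 1)).map e
      = (gaussianReal 0 1).prod (gaussianReal 0 1) := by
    have hmeas : Measurable (fun p : ℝ × ℝ => gaussianPDF 0 1 p.1 * gaussianPDF 0 1 p.2) :=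
      Measurable.mul ((measurable_gaussianPDF 0 1).comp measurable_fst)
        ((measurable_gaussianPDF 0 1).comp measurable_snd)
    rw [gaussian_prod_eq_withDensity, withDensity_map_equiv volume e hmeas, hvol, hdens]
  have hcomp : (fun p : ℝ × ℝ => c * p.1 + d * p.2) = Prod.fst ∘ e := by
    funext p
    simp [hfun]
    rw [rotEquiv_apply]
  rw [hcomp, ← Measure.map_map measurable_fst e.measurable, hP, Measure.map_fst_prod]
  simp

lemma map_lin (m c d : ℝ) :
    ((gaussianReal 0 1).prod (gaussianReal 0 1)).map
      (fun p : ℝ × ℝ => m + (c * p.1 + d * p.2))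
      = gaussianReal m ⟨c ^ 2 + d ^ 2, by positivity⟩ := by
  by_cases hr : c ^ 2 + d ^ 2 = 0
  · have hc : c = 0 := by nlinarith [sq_nonneg c, sq_nonneg d]
    have hd : d = 0 := by nlinarith [sq_nonneg c, sq_nonneg d]
    have hv : (⟨c ^ 2 + d ^ 2, by positivity⟩ : NNReal) = 0 := by
      exact Subtype.ext (by simp [hc, hd])
    rw [show gaussianReal m ⟨c ^ 2 + d ^ 2, by positivity⟩ = gaussianReal m 0 from
      congrArg (gaussianReal m) hv, gaussianReal_zero_var]
    have hfun : (fun p : ℝ × ℝ => m + (c * p.1 + d * p.2)) = fun _ => m := by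
      funext p; rw [hc, hd]; ring
    rw [hfun, Measure.map_const]
    simp
  · have hpos : 0 < c ^ 2 + d ^ 2 := lt_of_le_of_ne (by positivity) (Ne.symm hr)
    set r := Real.sqrt (c ^ 2 + d ^ 2) with hrdef
    have hr0 : 0 < r := Real.sqrt_pos.mpr hpos
    have hr2 : r ^ 2 = c ^ 2 + d ^ 2 := Real.sq_sqrt hpos.le
    have hunit : (c / r) ^ 2 + (d / r) ^ 2 = 1 := by
      rw [div_pow, div_pow, ← add_div, hr2, div_self hr]
    have hπ : Measurable (fun p : ℝ × ℝ => (c / r) * p.1 + (d / r) * p.2) :=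
      (measurable_fst.const_mul _).add (measurable_snd.const_mul _)
    have hmul : Measurable (fun x : ℝ => r * x) := measurable_id.const_mul r
    have hadd : Measurable (fun x : ℝ => x + m) := measurable_id.add_const m
    have hfe : (fun p : ℝ × ℝ => m + (c * p.1 + d * p.2))
        = ((fun x => x + m) ∘ (fun x => r * x)) ∘
          (fun p : ℝ × ℝ => (c / r) * p.1 + (d / r) * p.2) := by
      funext p
      simp only [Function.comp_apply]
      field_simp
      ring
    rw [hfe, ← Measure.map_map (hadd.comp hmul) hπ, map_rot (c / r) (d / r) hunit,
      ← Measure.map_map hadd hmul]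
    have h1 : (gaussianReal 0 1).map (fun x : ℝ => r * x)
        = gaussianReal 0 (⟨r ^ 2, sq_nonneg r⟩ * 1) := by
      have := gaussianReal_map_const_mul (μ := 0) (v := 1) r
      rw [mul_zero] at this; exact this
    rw [h1]
    have h2 : (gaussianReal (0 : ℝ) (⟨r ^ 2, sq_nonneg r⟩ * 1)).map (fun x : ℝ => x + m)
        = gaussianReal (0 + m) (⟨r ^ 2, sq_nonneg r⟩ * 1) := gaussianReal_map_add_const m
    rw [h2, zero_add]
    congr 1
    exact Subtype.ext (show r ^ 2 * 1 = c ^ 2 + d ^ 2 by rw [mul_one]; exact hr2)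

theorem gaussian_jm_sufficient
    (n : ℕ) (μ : Fin n → ℝ) (σ : Fin n → NNReal)
    (hσ : 2 * Finset.univ.sup σ ≤ ∑ i, σ i) :
    ∃ (Ω : Type) (_ : MeasurableSpace Ω) (P : Measure Ω) (_ : IsProbabilityMeasure P)
      (X : Fin n → Ω → ℝ), (∀ i, Measurable (X i)) ∧
      (∀ i, P.map (X i) = gaussianReal (μ i) (σ i ^ 2)) ∧
      (∀ᵐ ω ∂P, ∑ i, X i ω = ∑ i, μ i) := by
  obtain ⟨c, d, hcd, hc0, hd0⟩ := exists_planar n σ hσ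
  refine ⟨ℝ × ℝ, inferInstance, (gaussianReal 0 1).prod (gaussianReal 0 1), inferInstance,
    fun i => fun p => μ i + (c i * p.1 + d i * p.2), fun i =>
      measurable_const.add ((measurable_fst.const_mul _).add (measurable_snd.const_mul _)),
    fun i => ?_, ?_⟩
  · rw [map_lin (μ i) (c i) (d i)]
    congr 1
    refine Subtype.ext ?_
    push_cast
    exact hcd i
  · refine MeasureTheory.ae_of_all _ fun p => ?_
    have hsum : ∑ i, (μ i + (c i * p.1 + d i * p.2))
        = ∑ i, μ i + ((∑ i, c i) * p.1 + (∑ i, d i) * p.2) := by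
      rw [Finset.sum_add_distrib, Finset.sum_add_distrib, ← Finset.sum_mul, ← Finset.sum_mul]
    rw [hsum, hc0, hd0]
    ring
end

section
/- If there exist random variables X_i ~ N(μ_i, σ_i²), i = 1,...,n, with X_1+...+X_n constant almost surely, then σ_1+...+σ_n ≥ 2·max_i σ_i. -/
open MeasureTheory ProbabilityTheory
open Real
open scoped NNReal ENNReal

lemma sq_moment_gaussian {b : ℝ} (hb : 0 < b) :
    ∫ x : ℝ, x ^ 2 * rexp (-b * x ^ 2) = √(π / b) / (2 * b) := by
  have hrpow : ∀ x : ℝ, x ^ (2 : ℝ) = x ^ 2 := fun x => by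
    rw [show (2:ℝ) = ((2:ℕ):ℝ) by norm_num, Real.rpow_natCast]
  have hint : Integrable fun x : ℝ => x ^ 2 * rexp (-b * x ^ 2) := by
    have := integrable_rpow_mul_exp_neg_mul_sq hb (s := 2) (by norm_num)
    simpa [hrpow] using this
  have hd : ∀ x : ℝ, HasDerivAt (fun x : ℝ => x * rexp (-b * x ^ 2))
      (rexp (-b * x ^ 2) - 2 * b * (x ^ 2 * rexp (-b * x ^ 2))) x := by
    intro x
    have h1 : HasDerivAt (fun x : ℝ => -b * x ^ 2) (-b * (2 * x)) x := by
      simpa using (hasDerivAt_pow 2 x).const_mul (-b)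
    have h3 : HasDerivAt (fun y => y * rexp (-b * y ^ 2))
        (1 * rexp (-b * x ^ 2) + x * (rexp (-b * x ^ 2) * (-b * (2 * x)))) x :=
      (hasDerivAt_id x).mul h1.exp
    convert h3 using 1
    ring
  have hf' : Integrable fun x : ℝ =>
      rexp (-b * x ^ 2) - 2 * b * (x ^ 2 * rexp (-b * x ^ 2)) :=
    (integrable_exp_neg_mul_sq hb).sub (hint.const_mul _)
  have h0 := integral_eq_zero_of_hasDerivAt_of_integrable hd hf'
      (integrable_mul_exp_neg_mul_sq hb)
  rw [integral_sub (integrable_exp_neg_mul_sq hb) (hint.const_mul _),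
    MeasureTheory.integral_const_mul, integral_gaussian] at h0
  have hb' : (2 : ℝ) * b ≠ 0 := by positivity
  rw [eq_div_iff hb']
  linear_combination -h0

lemma integrable_sq_mul_gaussianPDFReal (m : ℝ) {v : ℝ≥0} (hv : v ≠ 0) :
    Integrable (fun x : ℝ => (x - m) ^ 2 * gaussianPDFReal m v x) := by
  have hb : (0:ℝ) < (2 * (v:ℝ))⁻¹ := by
    have : (0:ℝ) < v := lt_of_le_of_ne (v.coe_nonneg) (by exact_mod_cast (Ne.symm hv))
    positivity
  have hrpow : ∀ x : ℝ, x ^ (2 : ℝ) = x ^ 2 := fun x => by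
    rw [show (2:ℝ) = ((2:ℕ):ℝ) by norm_num, Real.rpow_natCast]
  have hint : Integrable fun x : ℝ => x ^ 2 * rexp (-(2 * (v:ℝ))⁻¹ * x ^ 2) := by
    have := integrable_rpow_mul_exp_neg_mul_sq hb (s := 2) (by norm_num)
    simpa [hrpow] using this
  have hg : Integrable (fun t : ℝ =>
      (√(2 * π * v))⁻¹ * (t ^ 2 * rexp (-(2 * (v:ℝ))⁻¹ * t ^ 2))) := hint.const_mul _
  have := hg.comp_sub_right m
  refine this.congr (ae_of_all _ fun x => ?_)
  simp only [gaussianPDFReal]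
  have hv' : (0:ℝ) < v := lt_of_le_of_ne (v.coe_nonneg) (by exact_mod_cast (Ne.symm hv))
  rw [show -(x - m) ^ 2 / (2 * (v:ℝ)) = -(2 * (v:ℝ))⁻¹ * (x - m) ^ 2 by
    field_simp]
  ring

lemma integral_sq_mul_gaussianPDFReal (m : ℝ) {v : ℝ≥0} (hv : v ≠ 0) :
    ∫ x : ℝ, (x - m) ^ 2 * gaussianPDFReal m v x = v := by
  have hv' : (0:ℝ) < v := lt_of_le_of_ne (v.coe_nonneg) (by exact_mod_cast (Ne.symm hv))
  have hb : (0:ℝ) < (2 * (v:ℝ))⁻¹ := by positivity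
  have h1 : ∀ x : ℝ, (x - m) ^ 2 * gaussianPDFReal m v x
      = (fun t : ℝ => (√(2 * π * v))⁻¹ * (t ^ 2 * rexp (-(2 * (v:ℝ))⁻¹ * t ^ 2))) (x - m) := by
    intro x
    simp only [gaussianPDFReal]
    rw [show -(x - m) ^ 2 / (2 * (v:ℝ)) = -(2 * (v:ℝ))⁻¹ * (x - m) ^ 2 by
      field_simp]
    ring
  simp_rw [h1]
  rw [integral_sub_right_eq_self (μ := volume)
    (fun t : ℝ => (√(2 * π * v))⁻¹ * (t ^ 2 * rexp (-(2 * (v:ℝ))⁻¹ * t ^ 2))) m]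
  rw [MeasureTheory.integral_const_mul, sq_moment_gaussian hb]
  have h2 : π / ((2 * (v:ℝ))⁻¹) = 2 * π * v := by field_simp
  have h3 : (2 : ℝ) * (2 * (v:ℝ))⁻¹ = (v:ℝ)⁻¹ := by field_simp
  rw [h2, h3]
  have h4 : √(2 * π * v) ≠ 0 := by positivity
  field_simp

lemma lintegral_sq_sub_gaussianReal (m : ℝ) (v : ℝ≥0) :
    ∫⁻ x, (‖x - m‖₊ : ℝ≥0∞) ^ 2 ∂(gaussianReal m v) = (v : ℝ≥0∞) := by
  by_cases hv : v = 0
  · subst hv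
    rw [gaussianReal_zero_var]
    rw [lintegral_dirac]
    simp
  rw [gaussianReal_of_var_ne_zero _ hv,
    lintegral_withDensity_eq_lintegral_mul _ (measurable_gaussianPDF _ _)
      ((by measurability : Measurable fun x : ℝ => ((‖x - m‖₊ : ℝ≥0∞)) ^ 2))]
  have h1 : ∀ x : ℝ, (gaussianPDF m v * fun x => (‖x - m‖₊ : ℝ≥0∞) ^ 2) x
      = ENNReal.ofReal ((x - m) ^ 2 * gaussianPDFReal m v x) := by
    intro x
    simp only [Pi.mul_apply, gaussianPDF]
    rw [← enorm_eq_nnnorm, Real.enorm_eq_ofReal_abs, ← ENNReal.ofReal_pow (abs_nonneg _), sq_abs,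
      ← ENNReal.ofReal_mul (gaussianPDFReal_nonneg _ _ _), mul_comm]
  rw [lintegral_congr h1,
    ← ofReal_integral_eq_lintegral_ofReal (integrable_sq_mul_gaussianPDFReal m hv)
      (ae_of_all _ fun x => mul_nonneg (sq_nonneg _) (gaussianPDFReal_nonneg _ _ _)),
    integral_sq_mul_gaussianPDFReal m hv, ENNReal.ofReal_coe_nnreal]

lemma eLpNorm_sub_gaussianReal (m : ℝ) (v : ℝ≥0) :
    eLpNorm (fun x : ℝ => x - m) 2 (gaussianReal m v) = ((NNReal.sqrt v : ℝ≥0) : ℝ≥0∞) := by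
  rw [eLpNorm_eq_lintegral_rpow_enorm_toReal (two_ne_zero) (ENNReal.ofNat_ne_top)]
  simp only [ENNReal.toReal_ofNat, enorm_eq_nnnorm]
  have h1 : ∀ x : ℝ, ((‖x - m‖₊ : ℝ≥0∞)) ^ (2:ℝ) = (‖x - m‖₊ : ℝ≥0∞) ^ (2:ℕ) := by
    intro x
    rw [← ENNReal.rpow_natCast]
    norm_num
  simp_rw [h1]
  rw [lintegral_sq_sub_gaussianReal m v]
  rw [← ENNReal.coe_rpow_of_nonneg _ (by norm_num : (0:ℝ) ≤ 1/2), NNReal.sqrt_eq_rpow]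

lemma memℒp_sub_gaussianReal (m : ℝ) (v : ℝ≥0) :
    MemLp (fun x : ℝ => x - m) 2 (gaussianReal m v) :=
  ⟨(measurable_id.sub_const m).aestronglyMeasurable,
    by rw [eLpNorm_sub_gaussianReal]; exact ENNReal.coe_lt_top⟩

lemma integrable_id_gaussianReal (m : ℝ) (v : ℝ≥0) :
    Integrable (fun x : ℝ => x) (gaussianReal m v) := by
  have h := (memℒp_sub_gaussianReal m v).add (memLp_const (p := 2)
    (μ := gaussianReal m v) m)
  rw [show ((fun x : ℝ => x - m) + fun _ => m) = fun x : ℝ => x from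
    funext fun x => by simp] at h
  exact h.integrable one_le_two

lemma map_reflection_gaussianReal (m : ℝ) (v : ℝ≥0) :
    (gaussianReal m v).map (fun x => 2 * m - x) = gaussianReal m v := by
  have h1 : (gaussianReal m v).map (fun x => (-1 : ℝ) * x) = gaussianReal (-m) v := by
    rw [gaussianReal_map_const_mul]
    congr 1
    · ring
    · rw [show NNReal.mk ((-1:ℝ)^2) (sq_nonneg _) = 1 by ext; norm_num]
      rw [one_mul]
  rw [show (fun x : ℝ => 2 * m - x) = ((fun x : ℝ => x + 2 * m) ∘ (fun x : ℝ => (-1:ℝ) * x))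
      from funext fun x => by simp [Function.comp]; ring,
    ← Measure.map_map (by fun_prop) (by fun_prop), h1,
    gaussianReal_map_add_const]
  congr 1
  ring

lemma integral_id_gaussianReal (m : ℝ) (v : ℝ≥0) :
    ∫ x, x ∂(gaussianReal m v) = m := by
  have h0 := integrable_id_gaussianReal m v
  have h1 : ∫ x, x ∂(gaussianReal m v) = ∫ x, (2 * m - x) ∂(gaussianReal m v) := by
    conv_lhs => rw [← map_reflection_gaussianReal m v]
    exact integral_map ((measurable_const.sub measurable_id).aemeasurable)
      measurable_id.aestronglyMeasurable
  rw [integral_sub (integrable_const _) h0, integral_const] at h1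
  simp only [probReal_univ, measure_univ, ENNReal.toReal_one, smul_eq_mul, one_mul] at h1
  linarith

theorem gaussian_jm_necessary
    (n : ℕ) (μ : Fin n → ℝ) (σ : Fin n → NNReal)
    (Ω : Type*) [MeasurableSpace Ω] (P : Measure Ω) [IsProbabilityMeasure P]
    (X : Fin n → Ω → ℝ) (hmeas : ∀ i, Measurable (X i))
    (hlaw : ∀ i, P.map (X i) = gaussianReal (μ i) (σ i ^ 2))
    (c : ℝ) (hmix : ∀ᵐ ω ∂P, ∑ i, X i ω = c) :
    2 * Finset.univ.sup σ ≤ ∑ i, σ i := by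
  rcases Nat.eq_zero_or_pos n with hn | hn
  · subst hn
    simp
  have : Nonempty (Fin n) := ⟨⟨0, hn⟩⟩
  obtain ⟨j, -, hj⟩ := Finset.exists_mem_eq_sup Finset.univ Finset.univ_nonempty σ
  have hXae : ∀ i, AEMeasurable (X i) P := fun i => (hmeas i).aemeasurable
  -- integrability and means
  have hInt : ∀ i, Integrable (X i) P := by
    intro i
    have h := (integrable_map_measure measurable_id.aestronglyMeasurable (hXae i)).mp
      (by rw [hlaw i]; exact integrable_id_gaussianReal _ _)
    exact h
  have hEX : ∀ i, ∫ ω, X i ω ∂P = μ i := by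
    intro i
    have h := integral_map (hXae i) (measurable_id.aestronglyMeasurable
      (μ := P.map (X i)) (f := fun x : ℝ => x))
    rw [hlaw i, _root_.integral_id_gaussianReal] at h
    exact h.symm
  have hc : c = ∑ i, μ i := by
    have h1 : ∫ ω, (∑ i, X i ω) ∂P = c := by
      rw [integral_congr_ae (g := fun _ => c) hmix, integral_const]
      simp
    rw [integral_finset_sum _ (fun i _ => hInt i)] at h1
    simp_rw [hEX] at h1
    exact h1.symm
  -- centered variables and their L² norms
  set f : Fin n → Ω → ℝ := fun i ω => X i ω - μ i with hf
  have hfm : ∀ i, Measurable (f i) := fun i => (hmeas i).sub_const _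
  have hnorm : ∀ i, eLpNorm (f i) 2 P = (σ i : ℝ≥0∞) := by
    intro i
    have h1 := eLpNorm_map_measure (μ := P) (f := X i) (g := fun x : ℝ => x - μ i) (p := 2)
      ((measurable_id.sub_const (μ i)).aestronglyMeasurable) (hXae i)
    rw [hlaw i, eLpNorm_sub_gaussianReal, NNReal.sqrt_sq] at h1
    exact h1.symm
  have hae : f j =ᵐ[P] fun ω => - ∑ i ∈ Finset.univ.erase j, f i ω := by
    filter_upwards [hmix] with ω hω
    have hsum : ∑ i, f i ω = 0 := by
      simp only [hf, Finset.sum_sub_distrib, hω, hc, sub_self]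
    have h2 := Finset.add_sum_erase Finset.univ (fun i => f i ω) (Finset.mem_univ j)
    rw [← h2] at hsum
    linarith
  have hle : (σ j : ℝ≥0∞) ≤ ∑ i ∈ Finset.univ.erase j, (σ i : ℝ≥0∞) := by
    calc (σ j : ℝ≥0∞) = eLpNorm (f j) 2 P := (hnorm j).symm
      _ = eLpNorm (fun ω => ∑ i ∈ Finset.univ.erase j, f i ω) 2 P := by
          rw [eLpNorm_congr_ae hae]
          rw [show (fun ω => - ∑ i ∈ Finset.univ.erase j, f i ω)
            = - fun ω => ∑ i ∈ Finset.univ.erase j, f i ω from rfl, eLpNorm_neg]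
      _ = eLpNorm (∑ i ∈ Finset.univ.erase j, f i) 2 P := by
          congr 1
          funext ω
          simp [Finset.sum_apply]
      _ ≤ ∑ i ∈ Finset.univ.erase j, eLpNorm (f i) 2 P :=
          eLpNorm_sum_le (fun i _ => (hfm i).aestronglyMeasurable) one_le_two
      _ = ∑ i ∈ Finset.univ.erase j, (σ i : ℝ≥0∞) :=
          Finset.sum_congr rfl fun i _ => hnorm i
  have hle' : σ j ≤ ∑ i ∈ Finset.univ.erase j, σ i := by
    rw [← ENNReal.coe_finset_sum] at hle
    exact_mod_cast hle
  calc 2 * Finset.univ.sup σ = σ j + σ j := by rw [hj]; ring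
    _ ≤ σ j + ∑ i ∈ Finset.univ.erase j, σ i := by gcongr
    _ = ∑ i, σ i := Finset.add_sum_erase Finset.univ σ (Finset.mem_univ j)
end

section
/- For distributions F_1,...,F_n on ℝ with finite means and any p ∈ (0,1), the worst-case Value-at-Risk satisfies sup{VaR_p(S) : S ∈ D_n} ≤ (1/(1-p)) Σ_{i=1}^n ∫_p^1 F_i^{-1}(q) dq, where D_n = {X_1+...+X_n : X_i ~ F_i} and VaR_p(X) = inf{x : P(X ≤ x) ≥ p}. -/
open MeasureTheory Set Filter Topology

noncomputable def qf (μ : Measure ℝ) (q : ℝ) : ℝ :=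
  sInf {x : ℝ | ENNReal.ofReal q ≤ μ (Set.Iic x)}

section qf

variable {μ : Measure ℝ} [IsProbabilityMeasure μ] {q : ℝ}

lemma qf_set_nonempty (hq : q < 1) :
    {x : ℝ | ENNReal.ofReal q ≤ μ (Set.Iic x)}.Nonempty := by
  have h1 : ENNReal.ofReal q < 1 := ENNReal.ofReal_lt_one.mpr hq
  have ht : Tendsto (fun x : ℝ => μ (Iic x)) atTop (𝓝 1) := by
    simpa using tendsto_measure_Iic_atTop μ
  obtain ⟨x, hx⟩ := (Filter.Tendsto.eventually_const_le h1 ht).exists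
  exact ⟨x, hx⟩

lemma qf_exists_lt (hq : 0 < q) : ∃ b : ℝ, μ (Set.Iic b) < ENNReal.ofReal q := by
  by_contra h
  push_neg at h
  have hs : Tendsto (μ ∘ fun n : ℕ => Iic (-(n : ℝ))) atTop
      (𝓝 (μ (⋂ n : ℕ, Iic (-(n : ℝ))))) := by
    refine tendsto_measure_iInter_atTop (fun n => measurableSet_Iic.nullMeasurableSet)
      (fun a b hab => Iic_subset_Iic.mpr (by exact_mod_cast neg_le_neg (by exact_mod_cast hab)))
      ⟨0, measure_ne_top μ _⟩
  have hempty : (⋂ n : ℕ, Iic (-(n : ℝ))) = ∅ := by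
    ext x
    simp only [mem_iInter, mem_Iic, mem_empty_iff_false, iff_false]
    push_neg
    obtain ⟨n, hn⟩ := exists_nat_gt (-x)
    exact ⟨n, by linarith⟩
  have hle : ENNReal.ofReal q ≤ μ (⋂ n : ℕ, Iic (-(n : ℝ))) :=
    ge_of_tendsto' hs fun n => h _
  rw [hempty, measure_empty] at hle
  exact absurd hle (by simpa using (ENNReal.ofReal_pos.mpr hq).ne')

lemma qf_set_bddBelow (hq : 0 < q) :
    BddBelow {x : ℝ | ENNReal.ofReal q ≤ μ (Set.Iic x)} := by
  obtain ⟨b, hb⟩ := qf_exists_lt (μ := μ) hq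
  refine ⟨b, fun y hy => ?_⟩
  by_contra hby
  push_neg at hby
  exact absurd (le_trans hy (measure_mono (Iic_subset_Iic.mpr hby.le))) (not_le.mpr hb)

lemma qf_mem (hq0 : 0 < q) (hq1 : q < 1) :
    ENNReal.ofReal q ≤ μ (Set.Iic (qf μ q)) := by
  set S := {x : ℝ | ENNReal.ofReal q ≤ μ (Set.Iic x)} with hS
  have hne : S.Nonempty := qf_set_nonempty hq1
  have hbd : BddBelow S := qf_set_bddBelow hq0
  have hmemn : ∀ n : ℕ, ENNReal.ofReal q ≤ μ (Iic (qf μ q + 1 / (n + 1))) := by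
    intro n
    have hlt : sInf S < sInf S + 1 / (n + 1 : ℝ) := by
      have : (0:ℝ) < 1 / (n + 1 : ℝ) := by positivity
      linarith
    obtain ⟨y, hyS, hy⟩ := (csInf_lt_iff hbd hne).mp hlt
    exact le_trans hyS (measure_mono (Iic_subset_Iic.mpr hy.le))
  have hiInter : (⋂ n : ℕ, Iic (qf μ q + 1 / (n + 1 : ℝ))) = Iic (qf μ q) := by
    ext x
    simp only [mem_iInter, mem_Iic]
    constructor
    · intro h
      by_contra hx
      push_neg at hx
      obtain ⟨n, hn⟩ := exists_nat_one_div_lt (sub_pos.mpr hx)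
      have := h n
      linarith
    · intro h n
      have : (0:ℝ) < 1 / (n + 1 : ℝ) := by positivity
      linarith
  have hs : Tendsto (μ ∘ fun n : ℕ => Iic (qf μ q + 1 / (n + 1 : ℝ))) atTop
      (𝓝 (μ (⋂ n : ℕ, Iic (qf μ q + 1 / (n + 1 : ℝ))))) := by
    refine tendsto_measure_iInter_atTop (fun n => measurableSet_Iic.nullMeasurableSet)
      (fun a b hab => Iic_subset_Iic.mpr ?_) ⟨0, measure_ne_top μ _⟩
    have : (1 : ℝ) / (b + 1) ≤ 1 / (a + 1) := by
      apply one_div_le_one_div_of_le (by positivity)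
      exact_mod_cast add_le_add_left (by exact_mod_cast hab) 1
    linarith
  have := ge_of_tendsto' hs fun n => hmemn n
  rwa [hiInter] at this

lemma qf_le_iff (hq0 : 0 < q) (hq1 : q < 1) {x : ℝ} :
    qf μ q ≤ x ↔ ENNReal.ofReal q ≤ μ (Set.Iic x) := by
  constructor
  · intro h
    exact le_trans (qf_mem hq0 hq1) (measure_mono (Iic_subset_Iic.mpr h))
  · intro h
    exact csInf_le (qf_set_bddBelow hq0) h

lemma lt_qf_iff (hq0 : 0 < q) (hq1 : q < 1) {x : ℝ} :
    x < qf μ q ↔ μ (Set.Iic x) < ENNReal.ofReal q := by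
  rw [← not_le, ← not_le, not_iff_not, qf_le_iff hq0 hq1]

lemma qf_mono {a b : ℝ} (ha : 0 < a) (hb : b < 1) (hab : a ≤ b) :
    qf μ a ≤ qf μ b := by
  refine csInf_le_csInf (qf_set_bddBelow ha) (qf_set_nonempty hb) fun x hx => ?_
  exact le_trans (ENNReal.ofReal_le_ofReal hab) hx

lemma qf_superlevel {p : ℝ} (hp : p ∈ Set.Ioo (0:ℝ) 1) (x : ℝ) :
    {q : ℝ | q ∈ Set.Ioo p 1 ∧ x < qf μ q} = Set.Ioo (max p (μ (Set.Iic x)).toReal) 1 := by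
  ext q
  simp only [mem_setOf_eq, mem_Ioo, max_lt_iff]
  constructor
  · rintro ⟨⟨hpq, hq1⟩, hx⟩
    have h0q : 0 < q := hp.1.trans hpq
    rw [lt_qf_iff h0q hq1] at hx
    exact ⟨⟨hpq, (ENNReal.lt_ofReal_iff_toReal_lt (measure_ne_top μ _)).mp hx⟩, hq1⟩
  · rintro ⟨⟨hpq, hcq⟩, hq1⟩
    have h0q : 0 < q := hp.1.trans hpq
    refine ⟨⟨hpq, hq1⟩, (lt_qf_iff h0q hq1).mpr ?_⟩
    exact (ENNReal.lt_ofReal_iff_toReal_lt (measure_ne_top μ _)).mpr hcq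

end qf

section key

variable {μ : Measure ℝ} [IsProbabilityMeasure μ] {p : ℝ}

lemma prob_Ioi_eq (y : ℝ) :
    μ (Set.Ioi y) = ENNReal.ofReal (1 - (μ (Set.Iic y)).toReal) := by
  have h1 : μ (Set.Ioi y) = 1 - μ (Set.Iic y) := by
    rw [← Set.compl_Iic, measure_compl measurableSet_Iic (measure_ne_top μ _), measure_univ]
  rw [h1, ENNReal.ofReal_sub 1 ENNReal.toReal_nonneg, ENNReal.ofReal_one,
    ENNReal.ofReal_toReal (measure_ne_top μ _)]

lemma key_lemma (hμ : Integrable (fun x => x) μ) (hp : p ∈ Set.Ioo (0:ℝ) 1) :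
    (1 - p) * qf μ p + ∫ x, max (x - qf μ p) 0 ∂μ = ∫ q in p..1, qf μ q := by
  set t := qf μ p with ht
  have hpt : p ≤ (μ (Set.Iic t)).toReal := by
    have := qf_mem (μ := μ) hp.1 hp.2
    have h2 := ENNReal.toReal_mono (measure_ne_top μ _) this
    rwa [ENNReal.toReal_ofReal hp.1.le] at h2
  -- positive part integrand on measure side
  have hpos_int : Integrable (fun x => max (x - t) 0) μ :=
    (hμ.sub (integrable_const t)).pos_part
  have hpos_nn : (0:ℝ → ℝ) ≤ᵐ[μ] fun x => max (x - t) 0 :=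
    Filter.Eventually.of_forall fun x => le_max_right _ _
  have hpos_meas : Measurable fun x : ℝ => max (x - t) 0 :=
    (measurable_id.sub measurable_const).max measurable_const
  -- the auxiliary measurable extension of qf - t
  set g : ℝ → ℝ := fun q => if q ∈ Set.Ioo p 1 then qf μ q - t else 0 with hg
  have hg_meas : Measurable g := by
    apply measurable_of_Ioi
    intro y
    have hset : g ⁻¹' Set.Ioi y =
        {q : ℝ | q ∈ Set.Ioo p 1 ∧ (y + t) < qf μ q} ∪
          (if y < 0 then (Set.Ioo p 1)ᶜ else ∅) := by
      ext q
      simp only [Set.mem_preimage, Set.mem_Ioi, Set.mem_union, Set.mem_setOf_eq, g]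
      by_cases hq : q ∈ Set.Ioo p 1
      · rw [if_pos hq]
        by_cases hy : y < 0 <;> simp [hy, hq, lt_sub_iff_add_lt]
      · rw [if_neg hq]
        by_cases hy : y < 0 <;> simp [hy, hq]
    rw [hset, qf_superlevel hp]
    split <;> measurability
  have hfg : (fun q => qf μ q - t) =ᵐ[volume.restrict (Set.Ioo p 1)] g := by
    filter_upwards [ae_restrict_mem measurableSet_Ioo] with q hq
    simp only [g]
    rw [if_pos hq]
  have hf_meas : AEMeasurable (fun q => qf μ q - t) (volume.restrict (Set.Ioo p 1)) :=
    hg_meas.aemeasurable.congr hfg.symm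
  have hf_nn : (0:ℝ → ℝ) ≤ᵐ[volume.restrict (Set.Ioo p 1)] fun q => qf μ q - t := by
    filter_upwards [ae_restrict_mem measurableSet_Ioo] with q hq
    have : t ≤ qf μ q := qf_mono hp.1 hq.2 hq.1.le
    simpa [sub_nonneg] using this
  -- layer cake identity
  have hlayer : ∫⁻ q in Set.Ioo p 1, ENNReal.ofReal (qf μ q - t) =
      ∫⁻ x, ENNReal.ofReal (max (x - t) 0) ∂μ := by
    rw [lintegral_eq_lintegral_meas_lt _ hf_nn hf_meas,
      lintegral_eq_lintegral_meas_lt _ hpos_nn hpos_meas.aemeasurable]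
    refine setLIntegral_congr_fun measurableSet_Ioi
      (fun s hs => ?_)
    have hL : (volume.restrict (Set.Ioo p 1)) {q : ℝ | s < qf μ q - t}
        = ENNReal.ofReal (1 - (μ (Set.Iic (s + t))).toReal) := by
      rw [Measure.restrict_apply' measurableSet_Ioo]
      have h1 : {q : ℝ | s < qf μ q - t} ∩ Set.Ioo p 1
          = {q : ℝ | q ∈ Set.Ioo p 1 ∧ (s + t) < qf μ q} := by
        ext q; simp [lt_sub_iff_add_lt, and_comm]
      rw [h1, qf_superlevel hp]
      have hmax : max p ((μ (Set.Iic (s + t))).toReal) = (μ (Set.Iic (s + t))).toReal := by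
        refine max_eq_right (le_trans hpt ?_)
        exact ENNReal.toReal_mono (measure_ne_top μ _)
          (measure_mono (Iic_subset_Iic.mpr (by linarith [hs.out.le] : t ≤ s + t)))
      rw [Real.volume_Ioo, hmax]
    have hR : μ {x : ℝ | s < max (x - t) 0}
        = ENNReal.ofReal (1 - (μ (Set.Iic (s + t))).toReal) := by
      have h1 : {x : ℝ | s < max (x - t) 0} = Set.Ioi (s + t) := by
        ext x
        simp only [mem_setOf_eq, lt_max_iff, mem_Ioi]
        constructor
        · rintro (h | h)
          · linarith
          · exact absurd h (not_lt.mpr hs.out.le)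
        · intro h; left; linarith
      rw [h1, prob_Ioi_eq]
    rw [hL, hR]
  -- finiteness
  have hfin : ∫⁻ x, ENNReal.ofReal (max (x - t) 0) ∂μ < ⊤ := by
    rw [← ofReal_integral_eq_lintegral_ofReal hpos_int hpos_nn]
    exact ENNReal.ofReal_lt_top
  -- integrability of qf - t on Ioo p 1
  have hf_int : Integrable (fun q => qf μ q - t) (volume.restrict (Set.Ioo p 1)) := by
    refine ⟨hf_meas.aestronglyMeasurable, ?_⟩
    rw [hasFiniteIntegral_iff_ofReal hf_nn]
    rw [hlayer] at *
    exact hfin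
  -- real computation
  have hIooL : ∫ q in Set.Ioo p 1, (qf μ q - t) =
      (∫⁻ q in Set.Ioo p 1, ENNReal.ofReal (qf μ q - t)).toReal :=
    integral_eq_lintegral_of_nonneg_ae hf_nn hf_meas.aestronglyMeasurable
  have hIooR : ∫ x, max (x - t) 0 ∂μ =
      (∫⁻ x, ENNReal.ofReal (max (x - t) 0) ∂μ).toReal :=
    integral_eq_lintegral_of_nonneg_ae hpos_nn hpos_meas.aestronglyMeasurable
  have hmain : ∫ q in Set.Ioo p 1, (qf μ q - t) = ∫ x, max (x - t) 0 ∂μ := by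
    rw [hIooL, hIooR, hlayer]
  have hsplit : ∫ q in Set.Ioo p 1, qf μ q
      = (∫ q in Set.Ioo p 1, (qf μ q - t)) + (1 - p) * t := by
    have h1 : ∫ q in Set.Ioo p 1, qf μ q
        = ∫ q in Set.Ioo p 1, ((qf μ q - t) + t) := by
      congr 1; ext q; ring
    rw [h1, integral_add hf_int (integrable_const t), setIntegral_const,
      measureReal_def, Real.volume_Ioo, ENNReal.toReal_ofReal (by linarith [hp.2] : (0:ℝ) ≤ 1 - p),
      smul_eq_mul]
  rw [intervalIntegral.integral_of_le hp.2.le, integral_Ioc_eq_integral_Ioo, hsplit, hmain]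
  ring

end key

/-- VaR ≤ t + (1-p)⁻¹ E[(Y - t)⁺] for the law ν. -/
lemma var_le_markov {ν : Measure ℝ} [IsProbabilityMeasure ν] {p t : ℝ}
    (hp : p ∈ Set.Ioo (0:ℝ) 1) (hν : Integrable (fun x => x) ν) :
    qf ν p ≤ t + (1 - p)⁻¹ * ∫ y, max (y - t) 0 ∂ν := by
  set E := ∫ y, max (y - t) 0 ∂ν with hE
  have hE0 : 0 ≤ E := integral_nonneg fun y => le_max_right _ _
  set c := (1 - p)⁻¹ * E with hc
  have hp1 : (0:ℝ) < 1 - p := by linarith [hp.2]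
  have hc0 : 0 ≤ c := mul_nonneg (by positivity) hE0
  have hEc : E = (1 - p) * c := by
    rw [hc]; field_simp
  have hYint : Integrable (fun y => max (y - t) 0) ν :=
    (hν.sub (integrable_const t)).pos_part
  have hlint : ∫⁻ y, ENNReal.ofReal (max (y - t) 0) ∂ν = ENNReal.ofReal E :=
    (ofReal_integral_eq_lintegral_ofReal hYint
      (Filter.Eventually.of_forall fun y => le_max_right _ _)).symm
  refine le_of_forall_gt_imp_ge_of_dense fun x hx => ?_
  set ε := x - (t + c) with hε
  have hε0 : 0 < ε := by simp [hε]; linarith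
  rw [qf_le_iff hp.1 hp.2]
  -- Markov bound on ν (Ioi x)
  have hmarkov : ν (Set.Ioi x) ≤ ENNReal.ofReal (1 - p) := by
    have h1 : Set.Ioi x ⊆ {y : ℝ | ENNReal.ofReal (c + ε) ≤ ENNReal.ofReal (max (y - t) 0)} := by
      intro y hy
      simp only [Set.mem_Ioi] at hy
      have : c + ε ≤ max (y - t) 0 := le_max_of_le_left (by simp [hε] at hy ⊢; linarith)
      exact ENNReal.ofReal_le_ofReal this
    have hmb : Measurable (fun y : ℝ => ENNReal.ofReal (max (y - t) 0)) :=
      ((measurable_id.sub measurable_const).max measurable_const).ennreal_ofReal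
    have h2 := mul_meas_ge_le_lintegral₀ (μ := ν) hmb.aemeasurable (ENNReal.ofReal (c + ε))
    rw [hlint] at h2
    have h3 : ν (Set.Ioi x) * ENNReal.ofReal (c + ε) ≤ ENNReal.ofReal E :=
      le_trans (mul_le_mul_left (measure_mono h1) _) (by rwa [mul_comm] at h2)
    have h4 : ENNReal.ofReal E ≤ ENNReal.ofReal (1 - p) * ENNReal.ofReal (c + ε) := by
      rw [← ENNReal.ofReal_mul hp1.le]
      exact ENNReal.ofReal_le_ofReal (by rw [hEc]; nlinarith)
    have hne : ENNReal.ofReal (c + ε) ≠ 0 := by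
      simp [ENNReal.ofReal_eq_zero]; linarith
    have hnt : ENNReal.ofReal (c + ε) ≠ ⊤ := ENNReal.ofReal_ne_top
    exact (ENNReal.mul_le_mul_iff_left hne hnt).mp (le_trans h3 h4)
  have hIic : ν (Set.Iic x) = 1 - ν (Set.Ioi x) := by
    rw [← Set.compl_Iic, measure_compl measurableSet_Iic (measure_ne_top ν _), measure_univ]
    have hle : ν (Set.Iic x) ≤ 1 := prob_le_one
    rw [ENNReal.sub_sub_cancel ENNReal.one_ne_top hle]
  have hsum : ENNReal.ofReal p + ENNReal.ofReal (1 - p) = 1 := by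
    rw [← ENNReal.ofReal_add hp.1.le hp1.le]
    norm_num
  have : ENNReal.ofReal p = 1 - ENNReal.ofReal (1 - p) :=
    (ENNReal.sub_eq_of_eq_add ENNReal.ofReal_ne_top hsum.symm).symm
  rw [hIic, this]
  exact tsub_le_tsub_left hmarkov 1

theorem worst_case_var_bound
    (n : ℕ) (F : Fin n → Measure ℝ) [∀ i, IsProbabilityMeasure (F i)]
    (hint : ∀ i, Integrable (fun x => x) (F i))
    (p : ℝ) (hp : p ∈ Set.Ioo (0 : ℝ) 1)
    (Ω : Type*) [MeasurableSpace Ω] (P : Measure Ω) [IsProbabilityMeasure P]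
    (X : Fin n → Ω → ℝ) (hmeas : ∀ i, Measurable (X i)) (hlaw : ∀ i, P.map (X i) = F i) :
    sInf {x : ℝ | ENNReal.ofReal p ≤ P {ω | ∑ i, X i ω ≤ x}} ≤
      (1 - p)⁻¹ * ∑ i, ∫ q in p..1,
        sInf {x : ℝ | ENNReal.ofReal q ≤ F i (Set.Iic x)} := by
  have hp1 : (0:ℝ) < 1 - p := by linarith [hp.2]
  set t : Fin n → ℝ := fun i => qf (F i) p with htdef
  have hXint : ∀ i, Integrable (X i) P := by
    intro i
    have h := hint i
    rw [← hlaw i] at h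
    simpa [Function.comp] using
      (integrable_map_measure aestronglyMeasurable_id (hmeas i).aemeasurable).mp h
  have hSmeas : Measurable (fun ω => ∑ i, X i ω) :=
    Finset.measurable_sum _ (fun i _ => hmeas i)
  have hSint : Integrable (fun ω => ∑ i, X i ω) P :=
    integrable_finset_sum _ (fun i _ => hXint i)
  set ν := P.map (fun ω => ∑ i, X i ω) with hν
  haveI : IsProbabilityMeasure ν := Measure.isProbabilityMeasure_map hSmeas.aemeasurable
  have hνint : Integrable (fun x => x) ν :=
    (integrable_map_measure aestronglyMeasurable_id hSmeas.aemeasurable).mpr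
      (by simpa [Function.comp] using hSint)
  have hLHS : sInf {x : ℝ | ENNReal.ofReal p ≤ P {ω | ∑ i, X i ω ≤ x}} = qf ν p := by
    rw [qf]
    congr 1
    ext x
    simp only [Set.mem_setOf_eq]
    rw [Measure.map_apply hSmeas measurableSet_Iic]
    rfl
  show sInf {x : ℝ | ENNReal.ofReal p ≤ P {ω | ∑ i, X i ω ≤ x}} ≤
      (1 - p)⁻¹ * ∑ i, ∫ q in p..1, qf (F i) q
  rw [hLHS]
  set T := ∑ i, t i with hT
  have hEmap : ∫ y, max (y - T) 0 ∂ν = ∫ ω, max ((∑ i, X i ω) - T) 0 ∂P := by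
    rw [hν, integral_map hSmeas.aemeasurable
      (Continuous.aestronglyMeasurable (by continuity))]
  have hEi_int : ∀ i, Integrable (fun ω => max (X i ω - t i) 0) P :=
    fun i => ((hXint i).sub (integrable_const _)).pos_part
  have hE_le : ∫ ω, max ((∑ i, X i ω) - T) 0 ∂P ≤ ∑ i, ∫ ω, max (X i ω - t i) 0 ∂P := by
    rw [← integral_finset_sum _ (fun i _ => hEi_int i)]
    refine integral_mono ((hSint.sub (integrable_const T)).pos_part)
      (integrable_finset_sum _ (fun i _ => hEi_int i)) fun ω => ?_
    have h1 : (∑ i, X i ω) - T = ∑ i, (X i ω - t i) := by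
      rw [hT, Finset.sum_sub_distrib]
    rw [h1]
    exact max_le (Finset.sum_le_sum fun i _ => le_max_left _ _)
      (Finset.sum_nonneg fun i _ => le_max_right _ _)
  have hEiF : ∀ i, ∫ ω, max (X i ω - t i) 0 ∂P = ∫ x, max (x - t i) 0 ∂(F i) := by
    intro i
    rw [← hlaw i, integral_map (hmeas i).aemeasurable
      (Continuous.aestronglyMeasurable (by continuity))]
  have hvar := var_le_markov (ν := ν) (t := T) hp hνint
  rw [hEmap] at hvar
  have hkey : ∀ i, (1 - p) * t i + ∫ x, max (x - t i) 0 ∂(F i) = ∫ q in p..1, qf (F i) q :=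
    fun i => key_lemma (hint i) hp
  have hsum : ∑ i, ∫ q in p..1, qf (F i) q
      = (1 - p) * T + ∑ i, ∫ x, max (x - t i) 0 ∂(F i) := by
    rw [hT, Finset.mul_sum, ← Finset.sum_add_distrib]
    exact (Finset.sum_congr rfl fun i _ => (hkey i).symm)
  have hfinal : T + (1 - p)⁻¹ * ∑ i, ∫ x, max (x - t i) 0 ∂(F i)
      = (1 - p)⁻¹ * ∑ i, ∫ q in p..1, qf (F i) q := by
    rw [hsum]
    field_simp
  calc qf ν p ≤ T + (1 - p)⁻¹ * ∫ ω, max ((∑ i, X i ω) - T) 0 ∂P := hvar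
    _ ≤ T + (1 - p)⁻¹ * ∑ i, ∫ x, max (x - t i) 0 ∂(F i) := by
        have h2 : ∑ i, ∫ ω, max (X i ω - t i) 0 ∂P = ∑ i, ∫ x, max (x - t i) 0 ∂(F i) :=
          Finset.sum_congr rfl fun i _ => hEiF i
        have := hE_le.trans_eq h2
        nlinarith [inv_nonneg.mpr hp1.le, mul_le_mul_of_nonneg_left this (inv_nonneg.mpr hp1.le)]
    _ = (1 - p)⁻¹ * ∑ i, ∫ q in p..1, qf (F i) q := hfinal
end
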